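/- arXiv:0806.1210 — 2 statements merged into one kernel-verified Lean document; each statement's English description precedes it below -/
import Mathlib

section
/- For every complete folding sequence S, each n ≥ 3, the number of distinct subwords of S that are n-folding sequences is exactly 8. -/
/-- Reversal-with-negation of a finite ±1 word. -/
def negRev (S : List ℤ) : List ℤ := (S.map (fun x => -x)).reverse

/-- `IsFold n S` : `S` is an `n`-folding sequence. -/
inductive IsFold : ℕ → List ℤ → Prop
  | zero : IsFold 0 []
  | succ (n : ℕ) (S : List ℤ) (ε : ℤ) : IsFold n S → (ε = 1 ∨ ε = -1) →
      IsFold (n + 1) (negRev S ++ ε :: S)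

/-- The subword `(a (h+1), …, a (h+t))` of a bi-infinite sequence. -/
def subwordAt (a : ℤ → ℤ) (h : ℤ) (t : ℕ) : List ℤ :=
  (List.range t).map fun i => a (h + 1 + (i : ℤ))

/-- `T` is a finite subword of the bi-infinite sequence `a`. -/
def IsSubword (a : ℤ → ℤ) (T : List ℤ) : Prop := ∃ h : ℤ, T = subwordAt a h T.length

/-- A finite folding sequence: a subword of some `n`-folding sequence. -/
def IsFiniteFold (T : List ℤ) : Prop := ∃ n S, IsFold n S ∧ T <:+: S

/-- The sequence takes values in `{+1, -1}`. -/
def PM (a : ℤ → ℤ) : Prop := ∀ h : ℤ, a h = 1 ∨ a h = -1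

/-- `a (hn + k·2^(n+1)) = (-1)^k · a hn` for all `k`. -/
def AltProp (a : ℤ → ℤ) (n : ℕ) (hn : ℤ) : Prop :=
  ∀ k : ℤ, a (hn + k * 2 ^ (n + 1)) = if Even k then a hn else -a hn

/-- A complete folding sequence (alternation characterization). -/
def CompleteFold (a : ℤ → ℤ) : Prop := PM a ∧ ∀ n : ℕ, ∃ hn : ℤ, AltProp a n hn

/-- Rotate a direction left (`η = 1`) or right (otherwise). -/
def rot (d : ℤ × ℤ) (η : ℤ) : ℤ × ℤ := if η = 1 then (-d.2, d.1) else (d.2, -d.1)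

/-- Unit lattice direction. -/
def IsUnitVec (d : ℤ × ℤ) : Prop := d = (1, 0) ∨ d = (0, 1) ∨ d = (-1, 0) ∨ d = (0, -1)

/-- Direction of the `i`-th step of the curve with turn word `η`. -/
def dirAt (d0 : ℤ × ℤ) (η : List ℤ) (i : ℕ) : ℤ × ℤ := (η.take i).foldl rot d0

/-- `i`-th vertex of the curve started at `X0` with initial direction `d0`. -/
def vertexAt (X0 d0 : ℤ × ℤ) (η : List ℤ) (i : ℕ) : ℤ × ℤ :=
  X0 + ∑ j ∈ Finset.range i, dirAt d0 η j

/-- `i`-th (unordered) unit edge of the curve. -/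
def edgeAt (X0 d0 : ℤ × ℤ) (η : List ℤ) (i : ℕ) : Sym2 (ℤ × ℤ) :=
  s(vertexAt X0 d0 η i, vertexAt X0 d0 η (i + 1))

/-- A complete folding curve, given by its vertex function. -/
def IsCFCurve (V : ℤ → ℤ × ℤ) : Prop :=
  (∀ i : ℤ, IsUnitVec (V (i + 1) - V i)) ∧
  ∃ η : ℤ → ℤ, CompleteFold η ∧ ∀ i : ℤ, V (i + 2) - V (i + 1) = rot (V (i + 1) - V i) (η i)

/-- Two bi-infinite curves are disjoint: no common unit edge, and at every common
lattice point the four incident traversed edges point in four distinct directions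
(the curves do not cross). -/
def CurvesDisjoint (V W : ℤ → ℤ × ℤ) : Prop :=
  (∀ i j : ℤ, s(V i, V (i + 1)) ≠ s(W j, W (j + 1))) ∧
  ∀ i j : ℤ, V i = W j →
    List.Pairwise (· ≠ ·) [V (i - 1) - V i, V (i + 1) - V i, W (j - 1) - W j, W (j + 1) - W j]


namespace S16

def val (L : List ℤ) (q : ℕ) : ℤ := L.getD (q - 1) 0

def Rule (L : List ℤ) : Prop :=
  ∀ p u : ℕ, 2^p * (2*u+3) ≤ L.length → val L (2^p*(2*u+3)) = - val L (2^p*(2*u+1))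

def PMw (L : List ℤ) : Prop := ∀ i, i < L.length → L.getD i 0 = 1 ∨ L.getD i 0 = -1

lemma length_negRev (S : List ℤ) : (negRev S).length = S.length := by simp [negRev]

lemma getD_negRev (S : List ℤ) (i : ℕ) (h : i < S.length) :
    (negRev S).getD i 0 = -(S.getD (S.length - 1 - i) 0) := by
  have h' : i < (negRev S).length := by rwa [length_negRev]
  have h2 : S.length - 1 - i < S.length := by omega
  rw [List.getD_eq_getElem _ _ h', List.getD_eq_getElem _ _ h2]
  simp only [negRev]
  rw [List.getElem_reverse]
  simp

-- helpers about C = negRev S ++ ε :: S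
lemma valC_low (S : List ℤ) (ε : ℤ) (q : ℕ) (h1 : 1 ≤ q) (h2 : q ≤ S.length) :
    val (negRev S ++ ε :: S) q = - val S (S.length + 1 - q) := by
  have hlt : q - 1 < (negRev S).length := by rw [length_negRev]; omega
  unfold val
  rw [List.getD_append _ _ _ _ hlt, getD_negRev _ _ (by omega)]
  congr 2
  omega

lemma valC_mid (S : List ℤ) (ε : ℤ) :
    val (negRev S ++ ε :: S) (S.length + 1) = ε := by
  unfold val
  rw [List.getD_append_right _ _ _ _ (by rw [length_negRev]; omega)]
  rw [length_negRev]
  simp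

lemma valC_high (S : List ℤ) (ε : ℤ) (r : ℕ) (h1 : 1 ≤ r) :
    val (negRev S ++ ε :: S) (S.length + 1 + r) = val S r := by
  unfold val
  rw [List.getD_append_right _ _ _ _ (by rw [length_negRev]; omega)]
  rw [length_negRev]
  have : S.length + 1 + r - 1 - S.length = (r - 1) + 1 := by omega
  rw [this, List.getD_cons_succ]

lemma lengthC (S : List ℤ) (ε : ℤ) : (negRev S ++ ε :: S).length = 2 * S.length + 1 := by
  simp [length_negRev]; omega

lemma char_fwd {N : ℕ} {L : List ℤ} (h : IsFold N L) :
    L.length = 2^N - 1 ∧ PMw L ∧ Rule L := by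
  induction h with
  | zero =>
    refine ⟨by simp, fun i hi => by simp at hi, fun p u hb => ?_⟩
    have hx : 1 ≤ 2^p := Nat.one_le_two_pow
    simp only [List.length_nil] at hb
    nlinarith
  | succ N S ε hS hε IH =>
    obtain ⟨hlen, hpm, hrule⟩ := IH
    have hx0 : 1 ≤ 2^N := Nat.one_le_two_pow
    have hLlen : (negRev S ++ ε :: S).length = 2 * S.length + 1 := lengthC S ε
    constructor
    · rw [hLlen, hlen, pow_succ]; omega
    constructor
    · -- PMw
      intro i hi
      rw [hLlen] at hi
      have : (negRev S ++ ε :: S).getD i 0 = val (negRev S ++ ε :: S) (i+1) := by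
        unfold val; congr 1
      rw [this]
      rcases lt_trichotomy i S.length with hc | hc | hc
      · rw [valC_low S ε (i+1) (by omega) (by omega)]
        have h2 : S.length + 1 - (i+1) - 1 < S.length := by omega
        have := hpm (S.length + 1 - (i+1) - 1) h2
        unfold val; omega
      · subst hc; rw [valC_mid]; exact hε
      · have e1 : i + 1 = S.length + 1 + (i - S.length) := by omega
        rw [e1, valC_high S ε _ (by omega)]
        have := hpm (i - S.length - 1) (by omega)
        unfold val; omega
    · -- Rule
      intro p u hb
      rw [hLlen, hlen] at hb
      have hx : 1 ≤ 2^p := Nat.one_le_two_pow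
      have hpN : p < N := by
        by_contra hc
        have h2 : 2^N ≤ 2^p := Nat.pow_le_pow_right (by norm_num) (by omega)
        have h3 : 2^p * 3 ≤ 2^p * (2*u+3) := Nat.mul_le_mul_left _ (by omega)
        omega
      set E := 2^(N-p-1) with hEdef
      have hE : 1 ≤ E := Nat.one_le_two_pow
      have key : 2^p * (2*E) = 2^N := by
        rw [hEdef, ← pow_succ']
        rw [← pow_add]
        congr 1
        omega
      have hq3 : 2^p*(2*u+3) = 2^p*(2*u+1) + (2^p+2^p) := by ring
      have hQpos : 1 ≤ 2^p*(2*u+1) := Nat.one_le_iff_ne_zero.mpr (by positivity)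
      rcases lt_trichotomy (2*u+3) (2*E) with hc | hc | hc
      · -- both in first half
        set v := E - u - 2 with hv
        have hEeq : E = u + v + 2 := by omega
        rw [hEeq] at key
        have key4 : 2^p*(2*u+1) + 2^p*(2*v+1) + 2^p + 2^p = 2^N := by rw [← key]; ring
        have hr3 : 2^p*(2*v+3) = 2^p*(2*v+1) + (2^p+2^p) := by ring
        have hRpos : 1 ≤ 2^p*(2*v+1) := Nat.one_le_iff_ne_zero.mpr (by positivity)
        rw [hq3] at hb ⊢
        generalize hQ : 2^p*(2*u+1) = Q at key4 hb hQpos ⊢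
        generalize hR : 2^p*(2*v+1) = R at key4 hRpos
        have hrS := hrule p v (by rw [hr3, hR]; omega)
        rw [hr3, hR] at hrS
        rw [valC_low S ε (Q + (2^p+2^p)) (by omega) (by omega),
            valC_low S ε Q (by omega) (by omega)]
        rw [show S.length + 1 - (Q + (2^p+2^p)) = R from by omega,
            show S.length + 1 - Q = R + (2^p+2^p) from by omega]
        omega
      · -- 2E = 2u+3 impossible (parity)
        omega
      · rcases Nat.lt_or_ge (2*E) (2*u+1) with hc2 | hc2
        · -- both in second half
          set v := u - E with hv
          have hueq : u = v + E := by omega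
          have key4 : 2^N + 2^p*(2*v+1) = 2^p*(2*u+1) := by rw [← key, hueq]; ring
          have hr3 : 2^p*(2*v+3) = 2^p*(2*v+1) + (2^p+2^p) := by ring
          have hRpos : 1 ≤ 2^p*(2*v+1) := Nat.one_le_iff_ne_zero.mpr (by positivity)
          rw [hq3] at hb ⊢
          generalize hQ : 2^p*(2*u+1) = Q at key4 hb hQpos ⊢
          generalize hR : 2^p*(2*v+1) = R at key4 hRpos
          have hrS := hrule p v (by rw [hr3, hR]; omega)
          rw [hr3, hR] at hrS
          rw [show Q + (2^p+2^p) = S.length + 1 + (R + (2^p+2^p)) from by omega,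
              show Q = S.length + 1 + R from by omega]
          rw [valC_high S ε (R + (2^p+2^p)) (by omega), valC_high S ε R (by omega)]
          exact hrS
        · -- genuine straddle: 2E = 2u+2
          have hEeq : E = u + 1 := by omega
          rw [hEeq] at key
          have key4 : 2^p*(2*u+1) + 2^p = 2^N := by rw [← key]; ring
          rw [hq3] at hb ⊢
          generalize hQ : 2^p*(2*u+1) = Q at key4 hb hQpos ⊢
          rw [show Q + (2^p+2^p) = S.length + 1 + 2^p from by omega]
          rw [valC_high S ε (2^p) (by omega)]
          rw [valC_low S ε Q (by omega) (by omega)]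
          rw [show S.length + 1 - Q = 2^p from by omega]
          ring


lemma val_chain {L : List ℤ} (hR : Rule L) (p : ℕ) :
    ∀ u, 2^p*(2*u+1) ≤ L.length →
      val L (2^p*(2*u+1)) = if Even u then val L (2^p) else -val L (2^p) := by
  intro u
  induction u with
  | zero => intro h; simp
  | succ u IH =>
    intro h
    have hx : 1 ≤ 2^p := Nat.one_le_two_pow
    have e : 2^p*(2*(u+1)+1) = 2^p*(2*u+3) := by ring
    rw [e] at h ⊢
    have hsm : 2^p*(2*u+1) ≤ L.length :=
      le_trans (Nat.mul_le_mul_left _ (by omega)) h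
    have hstep := hR p u h
    have IH' := IH hsm
    rw [hstep, IH']
    rcases Nat.even_or_odd u with he | he
    · simp [Nat.even_add_one, he, Nat.not_even_iff_odd.symm.mp, he]
    · have : ¬ Even u := Nat.not_even_iff_odd.symm.mp he
      simp [Nat.even_add_one, this]

lemma char_bwd : ∀ (N : ℕ) (L : List ℤ), L.length = 2^N - 1 → PMw L → Rule L → IsFold N L := by
  intro N
  induction N with
  | zero =>
    intro L hl _ _
    have : L = [] := List.eq_nil_of_length_eq_zero (by simpa using hl)
    rw [this]; exact IsFold.zero
  | succ N IH =>
    intro L hl hpm hrule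
    have hx0 : 1 ≤ 2^N := Nat.one_le_two_pow
    have hpow : (2:ℕ)^(N+1) = 2*2^N := by rw [pow_succ]; ring
    have hlL : L.length = 2*2^N - 1 := by rw [hl, hpow]
    set S := L.drop (2^N) with hSdef
    have hSlen : S.length = 2^N - 1 := by
      rw [hSdef, List.length_drop, hlL]; omega
    set ε := L.getD (2^N - 1) 0 with hεdef
    have hε : ε = 1 ∨ ε = -1 := hpm _ (by omega)
    have D2 : ∀ r, 1 ≤ r → val S r = val L (2^N + r) := by
      intro r hr
      unfold val
      have e1 : 2^N + r - 1 = 2^N + (r - 1) := by omega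
      rw [e1]
      by_cases hcase : r - 1 < S.length
      · rw [List.getD_eq_getElem _ _ hcase,
            List.getD_eq_getElem _ _ (show 2^N + (r-1) < L.length by omega)]
        simp only [hSdef]
        rw [List.getElem_drop]
      · rw [List.getD_eq_default _ _ (by omega),
            List.getD_eq_default _ _ (show L.length ≤ 2^N + (r-1) by omega)]
    have hpmS : PMw S := by
      intro i hi
      have e := D2 (i+1) (by omega)
      unfold val at e
      simp only [Nat.add_sub_cancel] at e
      have e2 : 2^N + (i+1) - 1 = 2^N + i := by omega
      rw [e2] at e
      rw [e]
      exact hpm (2^N + i) (by omega)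
    have hruleS : Rule S := by
      intro p v hbv
      have hx : 1 ≤ 2^p := Nat.one_le_two_pow
      have hQpos : 1 ≤ 2^p*(2*v+1) := Nat.one_le_iff_ne_zero.mpr (by positivity)
      have hQpos' : 1 ≤ 2^p*(2*v+3) := Nat.one_le_iff_ne_zero.mpr (by positivity)
      have hq3 : 2^p*(2*v+3) = 2^p*(2*v+1) + (2^p+2^p) := by ring
      rw [hSlen] at hbv
      have hpN : p < N := by
        by_contra hc
        have h2 : 2^N ≤ 2^p := Nat.pow_le_pow_right (by norm_num) (by omega)
        have h3 : 2^p * 3 ≤ 2^p * (2*v+3) := Nat.mul_le_mul_left _ (by omega)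
        omega
      set E := 2^(N-p-1) with hEdef
      have key : 2^p*(2*E) = 2^N := by
        rw [hEdef, ← pow_succ', ← pow_add]; congr 1; omega
      have hi1 : 2^p*(2*(v+E)+1) = 2^N + 2^p*(2*v+1) := by rw [← key]; ring
      have hi2 : 2^p*(2*(v+E)+3) = 2^N + 2^p*(2*v+3) := by rw [← key]; ring
      have hmain := hrule p (v+E) (by rw [hi2]; omega)
      rw [hi1, hi2] at hmain
      rw [D2 _ hQpos', D2 _ hQpos]
      exact hmain
    have hfold := IH S hSlen hpmS hruleS
    have mirror : ∀ q, 1 ≤ q → q ≤ 2^N - 1 → val L q = - val L (2^(N+1) - q) := by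
      intro q hq1 hq2
      obtain ⟨p, w, hodd, hqeq⟩ := Nat.exists_eq_two_pow_mul_odd (show q ≠ 0 by omega)
      obtain ⟨u, rfl⟩ := hodd
      subst hqeq
      have hx : 1 ≤ 2^p := Nat.one_le_two_pow
      have hQpos : 1 ≤ 2^p*(2*u+1) := Nat.one_le_iff_ne_zero.mpr (by positivity)
      have hpN : p < N := by
        by_contra hc
        have h2 : 2^N ≤ 2^p := Nat.pow_le_pow_right (by norm_num) (by omega)
        have h3 : 2^p * 1 ≤ 2^p * (2*u+1) := Nat.mul_le_mul_left _ (by omega)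
        omega
      set E := 2^(N-p-1) with hEdef
      have hE : 1 ≤ E := Nat.one_le_two_pow
      have key : 2^p*(2*E) = 2^N := by
        rw [hEdef, ← pow_succ', ← pow_add]; congr 1; omega
      have hulE : 2*u+1 < 2*E := by
        by_contra hcon
        have h3 : 2^p * (2*E) ≤ 2^p * (2*u+1) := Nat.mul_le_mul_left _ (by omega)
        omega
      set u' := 2*E - u - 1 with hu'
      have key2 : 2^p*(2*(u+u'+1)) = 2^(N+1) := by
        rw [hpow, ← key]
        have : 2*(u+u'+1) = 2*E*2 := by omega
        rw [this]; ring
      have key4 : 2^p*(2*u+1) + 2^p*(2*u'+1) = 2^(N+1) := by rw [← key2]; ring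
      have hch1 := val_chain hrule p u (by omega)
      have hch2 := val_chain hrule p u' (by omega)
      rw [show 2^(N+1) - 2^p*(2*u+1) = 2^p*(2*u'+1) from by omega]
      rw [hch1, hch2]
      have hpar : (Even u ↔ ¬ Even u') := by
        rcases Nat.even_or_odd u with he | he <;>
          rcases Nat.even_or_odd u' with he' | he' <;>
            simp [Nat.even_iff, Nat.odd_iff] at he he' ⊢ <;> omega
      rcases Nat.even_or_odd u with he | he
      · have : ¬ Even u' := hpar.mp he
        simp [he, this]
      · have hne : ¬ Even u := Nat.not_even_iff_odd.symm.mp he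
        have : Even u' := by tauto
        simp [hne, this]
    have hCeq : L = negRev S ++ ε :: S := by
      apply List.ext_getElem
      · rw [lengthC, hSlen, hlL]; omega
      · intro i h1 h2
        have hiL : i < 2*2^N - 1 := by omega
        have hgoal : ∀ (M : List ℤ) (hm : i < M.length), M[i] = val M (i+1) := by
          intro M hm
          rw [val, Nat.add_sub_cancel, List.getD_eq_getElem _ _ hm]
        rw [hgoal L h1, hgoal _ h2]
        rcases lt_trichotomy (i+1) (2^N) with hc | hc | hc
        · rw [show (i+1) = (i+1) from rfl]
          have hvc := valC_low S ε (i+1) (by omega) (by omega)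
          rw [hvc, hSlen]
          rw [show 2^N - 1 + 1 - (i+1) = 2^N - (i+1) from by omega]
          rw [D2 _ (by omega)]
          have := mirror (i+1) (by omega) (by omega)
          rw [show 2^N + (2^N - (i+1)) = 2^(N+1) - (i+1) from by omega]
          omega
        · have hvc := valC_mid S ε
          rw [hSlen] at hvc
          rw [show 2^N - 1 + 1 = 2^N from by omega] at hvc
          rw [← hc] at hvc
          rw [hvc, hεdef]
          unfold val
          congr 1
          omega
        · have hr1 : 1 ≤ i + 1 - 2^N := by omega
          have hvc := valC_high S ε (i+1-2^N) hr1
          rw [hSlen, show 2^N - 1 + 1 + (i+1-2^N) = i+1 from by omega] at hvc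
          rw [hvc, D2 _ hr1, show 2^N + (i+1-2^N) = i+1 from by omega]
    rw [hCeq]
    exact IsFold.succ N S ε hfold hε


variable {a : ℤ → ℤ} {hh : ℕ → ℤ}

lemma class_val (halt : ∀ j, AltProp a j (hh j)) (j : ℕ) (x : ℤ) (c : ℤ)
    (hx : x = hh j + c * 2^(j+1)) :
    ∀ k : ℤ, a (x + k * 2^(j+1)) = if Even k then a x else -a x := by
  intro k
  have h1 : x + k * 2^(j+1) = hh j + (c+k) * 2^(j+1) := by rw [hx]; ring
  rw [h1, halt j (c+k), hx, halt j c]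
  have hck := Int.even_add (m := c) (n := k)
  by_cases hc : Even c <;> by_cases hk : Even k
  · rw [if_pos (hck.mpr (iff_of_true hc hk)), if_pos hc, if_pos hk]
  · rw [if_neg (fun h => hk ((hck.mp h).mp hc)), if_pos hc, if_neg hk]
  · rw [if_neg (fun h => hc ((hck.mp h).mpr hk)), if_neg hc, if_pos hk]
  · rw [if_pos (hck.mpr (iff_of_false hc hk)), if_neg hc, if_neg hk, neg_neg]

lemma not_same_class (hpm : PM a) (halt : ∀ j, AltProp a j (hh j)) {j j' : ℕ}
    (hlt : j < j') (c : ℤ) : hh j' ≠ hh j + c * 2^(j+1) := by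
  intro heq
  have h1 := halt j' 1
  rw [if_neg (by decide), one_mul] at h1
  have h2 := class_val halt j (hh j') c heq ((2:ℤ)^(j'-j))
  have hev : Even ((2:ℤ)^(j'-j)) := Int.even_pow.mpr ⟨even_two, by omega⟩
  have h3 : (2:ℤ)^(j'-j) * 2^(j+1) = 2^(j'+1) := by rw [← pow_add]; congr 1; omega
  rw [h3, if_pos hev] at h2
  rw [h1] at h2
  rcases hpm (hh j') with h | h <;> omega

lemma succ_class (hpm : PM a) (halt : ∀ j, AltProp a j (hh j)) :
    ∀ j j', j < j' → ∃ c : ℤ, hh j' = hh j + 2^j + c * 2^(j+1) := by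
  intro j
  induction j with
  | zero =>
    intro j' hj'
    rcases Int.even_or_odd' (hh j' - hh 0) with ⟨k, hk | hk⟩
    · exfalso
      exact not_same_class hpm halt hj' k (by push_cast; omega)
    · exact ⟨k, by push_cast; omega⟩
  | succ j IHj =>
    intro j' hj'
    obtain ⟨c, hc⟩ := IHj j' (by omega)
    obtain ⟨c', hc'⟩ := IHj (j+1) (by omega)
    have hd : hh j' = hh (j+1) + (c - c') * 2^(j+1) := by rw [hc, hc']; ring
    rcases Int.even_or_odd' (c - c') with ⟨k, hk | hk⟩
    · exfalso
      apply not_same_class hpm halt (show j+1 < j' by omega) k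
      rw [hd, hk, pow_succ]; ring
    · exact ⟨k, by rw [hd, hk, pow_succ]; ring⟩

lemma classify (hpm : PM a) (halt : ∀ j, AltProp a j (hh j)) :
    ∀ (J : ℕ) (x : ℤ), (∃ j, j ≤ J ∧ ∃ k : ℤ, x = hh j + k * 2^(j+1)) ∨
      (∃ c : ℤ, x = hh J + 2^J + c * 2^(J+1)) := by
  intro J
  induction J with
  | zero =>
    intro x
    rcases Int.even_or_odd' (x - hh 0) with ⟨k, hk | hk⟩
    · exact Or.inl ⟨0, le_refl 0, k, by push_cast; omega⟩
    · exact Or.inr ⟨k, by push_cast; omega⟩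
  | succ J IH =>
    intro x
    rcases IH x with ⟨j, hj, k, h⟩ | ⟨c, hc⟩
    · exact Or.inl ⟨j, by omega, k, h⟩
    · obtain ⟨c', hc'⟩ := succ_class hpm halt J (J+1) (by omega)
      have hd : x = hh (J+1) + (c - c') * 2^(J+1) := by rw [hc, hc']; ring
      rcases Int.even_or_odd' (c - c') with ⟨k, hk | hk⟩
      · exact Or.inl ⟨J+1, le_refl _, k, by rw [hd, hk, pow_succ]; ring⟩
      · exact Or.inr ⟨k, by rw [hd, hk, pow_succ]; ring⟩

lemma forcing (hpm : PM a) (halt : ∀ j, AltProp a j (hh j)) (j : ℕ) (x : ℤ)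
    (h1 : a (x + 2^(j+1)) = -a x)
    (h2 : a (x + 2*2^(j+1)) = -a (x + 2^(j+1)))
    (h3 : a (x + 3*2^(j+1)) = -a (x + 2*2^(j+1))) :
    ∃ c : ℤ, x = hh j + c * 2^(j+1) := by
  rcases classify hpm halt j x with ⟨j', hle, k, hx⟩ | ⟨c, hc⟩
  · by_cases hjj : j' = j
    · subst hjj; exact ⟨k, hx⟩
    · exfalso
      have hcv := class_val halt j' x k hx ((2:ℤ)^(j-j'))
      have hev : Even ((2:ℤ)^(j-j')) := Int.even_pow.mpr ⟨even_two, by omega⟩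
      have h4 : (2:ℤ)^(j-j') * 2^(j'+1) = 2^(j+1) := by rw [← pow_add]; congr 1; omega
      rw [h4, if_pos hev] at hcv
      rw [h1] at hcv
      rcases hpm x with h | h <;> omega
  · exfalso
    obtain ⟨c', hc'⟩ := succ_class hpm halt j (j+1) (by omega)
    have hd : x = hh (j+1) + (c - c') * 2^(j+1) := by rw [hc, hc']; ring
    rcases Int.even_or_odd' (c - c') with ⟨k, hk | hk⟩
    · have hx2 : x = hh (j+1) + k * 2^(j+2) := by rw [hd, hk, pow_succ]; ring
      have hcv := class_val halt (j+1) x k hx2 1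
      rw [if_neg (by decide), one_mul] at hcv
      have e : x + 2^(j+1+1) = x + 2*2^(j+1) := by rw [pow_succ]; ring
      rw [e] at hcv
      rw [h2, h1, neg_neg] at hcv
      rcases hpm x with h | h <;> omega
    · have hx2 : x + 2^(j+1) = hh (j+1) + (k+1) * 2^(j+2) := by
        rw [hd, hk, pow_succ]; ring
      have hcv := class_val halt (j+1) (x + 2^(j+1)) (k+1) hx2 1
      rw [if_neg (by decide), one_mul] at hcv
      have e : x + 2^(j+1) + 2^(j+1+1) = x + 3*2^(j+1) := by rw [pow_succ]; ring
      rw [e] at hcv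
      rw [h3, h2] at hcv
      rcases hpm (x + 2^(j+1)) with h | h <;> omega


lemma subword_eq (a : ℤ → ℤ) (h : ℤ) (t : ℕ) :
    subwordAt a h t = (List.range t).map (fun i : ℕ => a (h + 1 + (i : ℤ))) := by
  unfold subwordAt
  rw [bind_pure_comp, List.map_eq_map, List.map_map]
  rfl

lemma subword_length (a : ℤ → ℤ) (h : ℤ) (t : ℕ) : (subwordAt a h t).length = t := by
  rw [subword_eq, List.length_map, List.length_range]

lemma val_subword (a : ℤ → ℤ) (h : ℤ) (t : ℕ) (q : ℕ) (h1 : 1 ≤ q) (h2 : q ≤ t) :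
    val (subwordAt a h t) q = a (h + q) := by
  unfold val
  rw [subword_eq]
  rw [List.getD_eq_getElem _ _ (by simp only [List.length_map, List.length_range]; omega)]
  simp only [List.getElem_map, List.getElem_range]
  congr 1
  omega

lemma pmw_subword (a : ℤ → ℤ) (hpm : PM a) (h : ℤ) (t : ℕ) : PMw (subwordAt a h t) := by
  intro i hi
  rw [subword_length] at hi
  rw [subword_eq]
  rw [List.getD_eq_getElem _ _ (by simp only [List.length_map, List.length_range]; omega)]
  simp only [List.getElem_map, List.getElem_range]
  exact hpm _

variable {a : ℤ → ℤ} {hh : ℕ → ℤ} {m : ℕ}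

/-- T1: Rule of a good window, in terms of `a`. -/
lemma good_rule (hfold : IsFold (m+3) (subwordAt a h (2^(m+3) - 1))) :
    ∀ p u : ℕ, 2^p * (2*u+3) ≤ 2^(m+3) - 1 →
      a (h + (2:ℤ)^p * (2*(u:ℤ)+3)) = - a (h + (2:ℤ)^p * (2*(u:ℤ)+1)) := by
  intro p u hb
  obtain ⟨hlen, hpmw, hrule⟩ := char_fwd hfold
  have hx : 1 ≤ 2^p := Nat.one_le_two_pow
  have h1 : 1 ≤ 2^p*(2*u+1) := Nat.one_le_iff_ne_zero.mpr (by positivity)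
  have h2 : 2^p*(2*u+1) ≤ 2^p*(2*u+3) := Nat.mul_le_mul_left _ (by omega)
  have hr := hrule p u (by rwa [hlen])
  rw [val_subword a h _ _ (by omega) (by omega), val_subword a h _ _ (by omega) (by omega)] at hr
  have c1 : ((2^p*(2*u+3) : ℕ) : ℤ) = (2:ℤ)^p * (2*(u:ℤ)+3) := by push_cast; ring
  have c2 : ((2^p*(2*u+1) : ℕ) : ℤ) = (2:ℤ)^p * (2*(u:ℤ)+1) := by push_cast; ring
  rw [c1, c2] at hr
  exact hr

/-- T2: alignment of a good window. -/
lemma good_align (hpm : PM a) (halt : ∀ j, AltProp a j (hh j))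
    (hfold : IsFold (m+3) (subwordAt a h (2^(m+3) - 1))) :
    ∀ p, p ≤ m → ∃ c : ℤ, h + 2^p = hh p + c * 2^(p+1) := by
  intro p hp
  have hple : (2:ℕ)^p ≤ 2^m := Nat.pow_le_pow_right (by norm_num) hp
  have hm8 : (2:ℕ)^(m+3) = 8 * 2^m := by rw [pow_add]; ring
  have hbu : ∀ u : ℕ, u ≤ 2 → 2^p * (2*u+3) ≤ 2^(m+3) - 1 := by
    intro u hu
    have : 2^p * (2*u+3) ≤ 2^p * 7 := Nat.mul_le_mul_left _ (by omega)
    omega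
  have P0 := good_rule hfold p 0 (hbu 0 (by omega))
  have P1 := good_rule hfold p 1 (hbu 1 (by omega))
  have P2 := good_rule hfold p 2 (hbu 2 (by omega))
  norm_num at P0 P1 P2
  apply forcing hpm halt p (h + 2^p)
  · rw [show h + (2:ℤ)^p + 2^(p+1) = h + 2^p*3 from by rw [pow_succ]; ring,
        show h + (2:ℤ)^p = h + 2^p*1 from by ring]
    convert P0 using 3 <;> ring
  · rw [show h + (2:ℤ)^p + 2*2^(p+1) = h + 2^p*5 from by rw [pow_succ]; ring,
        show h + (2:ℤ)^p + 2^(p+1) = h + 2^p*3 from by rw [pow_succ]; ring]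
    convert P1 using 3 <;> ring
  · rw [show h + (2:ℤ)^p + 3*2^(p+1) = h + 2^p*7 from by rw [pow_succ]; ring,
        show h + (2:ℤ)^p + 2*2^(p+1) = h + 2^p*5 from by rw [pow_succ]; ring]
    convert P2 using 3 <;> ring


/-- T4: a window aligned at all levels ≤ m, satisfying the level-(m+1) flip,
is an (m+3)-folding word. -/
lemma family_good (hpm : PM a) (halt : ∀ j, AltProp a j (hh j)) (h : ℤ)
    (hA : ∀ p, p ≤ m → ∃ c : ℤ, h + 2^p = hh p + c * 2^(p+1))
    (hB : a (h + 3*2^(m+1)) = -a (h + (2:ℤ)^(m+1))) :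
    IsFold (m+3) (subwordAt a h (2^(m+3)-1)) := by
  apply char_bwd _ _ (subword_length a h _) (pmw_subword a hpm h _)
  intro p u hb
  rw [subword_length] at hb
  have hx : 1 ≤ 2^p := Nat.one_le_two_pow
  have h1q : 1 ≤ 2^p*(2*u+1) := Nat.one_le_iff_ne_zero.mpr (by positivity)
  have h2q : 2^p*(2*u+1) ≤ 2^p*(2*u+3) := Nat.mul_le_mul_left _ (by omega)
  rw [val_subword a h _ _ (by omega) (by omega), val_subword a h _ _ (by omega) (by omega)]
  have c1 : ((2^p*(2*u+3) : ℕ) : ℤ) = (2:ℤ)^p*(2*(u:ℤ)+3) := by push_cast; ring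
  have c2 : ((2^p*(2*u+1) : ℕ) : ℤ) = (2:ℤ)^p*(2*(u:ℤ)+1) := by push_cast; ring
  rw [c1, c2]
  by_cases hple : p ≤ m
  · obtain ⟨c, hc⟩ := hA p hple
    have hv1 := class_val halt p (h+2^p) c hc ((u:ℤ))
    have hv2 := class_val halt p (h+2^p) c hc ((u:ℤ)+1)
    have e1 : h + (2:ℤ)^p + (u:ℤ)*2^(p+1) = h + (2:ℤ)^p*(2*(u:ℤ)+1) := by
      rw [pow_succ]; ring
    have e2 : h + (2:ℤ)^p + ((u:ℤ)+1)*2^(p+1) = h + (2:ℤ)^p*(2*(u:ℤ)+3) := by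
      rw [pow_succ]; ring
    rw [e1] at hv1
    rw [e2] at hv2
    rw [hv1, hv2]
    rcases Int.even_or_odd (u:ℤ) with he | he
    · rw [if_pos he, if_neg (by simpa [Int.even_add_one] using he)]
    · have hne : ¬ Even (u:ℤ) := Int.not_even_iff_odd.mpr he
      rw [if_neg hne, if_pos (by simpa [Int.even_add_one] using hne), neg_neg]
  · by_cases hpe : p = m+1
    · subst hpe
      have hm3 : (2:ℕ)^(m+3) = 2^(m+1)*4 := by ring
      have hu : u = 0 := by
        by_contra hu0
        have : 2^(m+1)*4 ≤ 2^(m+1)*(2*u+3) := Nat.mul_le_mul_left _ (by omega)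
        omega
      subst hu
      norm_num
      rw [show h + (2:ℤ)^(m+1)*3 = h + 3*2^(m+1) from by ring]
      exact hB
    · exfalso
      have hp2 : m+2 ≤ p := by omega
      have hle : (2:ℕ)^(m+2) ≤ 2^p := Nat.pow_le_pow_right (by norm_num) hp2
      have h3 : 2^p*3 ≤ 2^p*(2*u+3) := Nat.mul_le_mul_left _ (by omega)
      have hm3 : (2:ℕ)^(m+3) = 2^(m+2)*2 := by ring
      have : 2^(m+2)*3 ≤ 2^p*3 := Nat.mul_le_mul_right _ hle
      omega

/-- T3: two good windows agreeing on the three top letters agree everywhere. -/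
lemma letters_det (hpm : PM a) (halt : ∀ j, AltProp a j (hh j)) (h h' : ℤ)
    (hf : IsFold (m+3) (subwordAt a h (2^(m+3)-1)))
    (hf' : IsFold (m+3) (subwordAt a h' (2^(m+3)-1)))
    (t1 : a (h + 2^m) = a (h' + 2^m))
    (t2 : a (h + 2^(m+1)) = a (h' + 2^(m+1)))
    (t3 : a (h + 2^(m+2)) = a (h' + 2^(m+2))) :
    ∀ q : ℕ, 1 ≤ q → q ≤ 2^(m+3) - 1 → a (h + (q:ℤ)) = a (h' + (q:ℤ)) := by
  have alignH := good_align hpm halt hf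
  have alignH' := good_align hpm halt hf'
  obtain ⟨c, hc⟩ := alignH m le_rfl
  obtain ⟨c', hc'⟩ := alignH' m le_rfl
  have hk : h' = h + (c'-c) * 2^(m+1) := by linear_combination hc' - hc
  intro q hq1 hq2
  obtain ⟨p, w, hodd, hqe⟩ := Nat.exists_eq_two_pow_mul_odd (show q ≠ 0 by omega)
  obtain ⟨u, rfl⟩ := hodd
  subst hqe
  have hx : 1 ≤ 2^p := Nat.one_le_two_pow
  have hup : 2^p ≤ 2^p*(2*u+1) := Nat.le_mul_of_pos_right _ (by omega)
  have hple : p ≤ m+2 := by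
    by_contra hcon
    have : (2:ℕ)^(m+3) ≤ 2^p := Nat.pow_le_pow_right (by norm_num) (by omega)
    omega
  have ccast : ((2^p*(2*u+1) : ℕ) : ℤ) = (2:ℤ)^p*(2*(u:ℤ)+1) := by push_cast; ring
  rw [ccast]
  by_cases hpm' : p ≤ m
  · obtain ⟨cp, hcp⟩ := alignH p hpm'
    obtain ⟨cp', hcp'⟩ := alignH' p hpm'
    have base : a (h + 2^p) = a (h' + 2^p) := by
      by_cases hpe : p = m
      · subst hpe; exact t1
      · have hev : Even ((c'-c) * 2^(m-p)) :=
          (Int.even_pow.mpr ⟨even_two, by omega⟩).mul_left _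
        have hcv := class_val halt p (h + 2^p) cp hcp ((c'-c) * 2^(m-p))
        rw [if_pos hev] at hcv
        have epos : h + (2:ℤ)^p + ((c'-c) * 2^(m-p)) * 2^(p+1) = h' + 2^p := by
          rw [hk]
          have : (2:ℤ)^(m-p) * 2^(p+1) = 2^(m+1) := by
            rw [← pow_add]; congr 1; omega
          linear_combination (c'-c) * this
        rw [epos] at hcv
        exact hcv.symm
    have epos1 : h + (2:ℤ)^p + (u:ℤ)*2^(p+1) = h + (2:ℤ)^p*(2*(u:ℤ)+1) := by
      rw [pow_succ]; ring
    have epos2 : h' + (2:ℤ)^p + (u:ℤ)*2^(p+1) = h' + (2:ℤ)^p*(2*(u:ℤ)+1) := by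
      rw [pow_succ]; ring
    have hv1 := class_val halt p (h + 2^p) cp hcp (u:ℤ)
    have hv2 := class_val halt p (h' + 2^p) cp' hcp' (u:ℤ)
    rw [epos1] at hv1
    rw [epos2] at hv2
    rw [hv1, hv2, base]
  · by_cases hpe : p = m+1
    · subst hpe
      have hm3 : (2:ℕ)^(m+3) = 2^(m+1)*4 := by ring
      have hu : u ≤ 1 := by
        by_contra hu0
        have : 2^(m+1)*4 ≤ 2^(m+1)*(2*u+1) := Nat.mul_le_mul_left _ (by omega)
        omega
      have hb3 : (2:ℕ)^(m+1)*3 ≤ 2^(m+3) - 1 := by omega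
      interval_cases u
      · norm_num
        exact t2
      · have P := good_rule hf (m+1) 0 hb3
        have P' := good_rule hf' (m+1) 0 hb3
        norm_num at P P' ⊢
        rw [P, P', t2]
    · have hpe2 : p = m+2 := by omega
      subst hpe2
      have hm3 : (2:ℕ)^(m+3) = 2^(m+2)*2 := by ring
      have hu : u = 0 := by
        by_contra hu0
        have : 2^(m+2)*2 ≤ 2^(m+2)*(2*u+1) := Nat.mul_le_mul_left _ (by omega)
        omega
      subst hu
      norm_num
      exact t3


variable {cb cc cd : ℤ}

lemma pickIf (A s : ℤ) (hA : A = 1 ∨ A = -1) (hs : s = 1 ∨ s = -1) : s = A ∨ s = -A := by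
  omega

section

variable {cb cc cd : ℤ}


lemma hg_even (halt : ∀ j, AltProp a j (hh j)) : ∀ j : ℤ, a (hh (m+1) + (2*j)*2^(m+1))
    = if Even j then a (hh (m+1)) else -a (hh (m+1)) := by
  intro j
  have h := halt (m+1) j
  rw [show hh (m+1) + j*2^(m+1+1) = hh (m+1) + (2*j)*2^(m+1) from by ring] at h
  exact h

lemma hf_even (halt : ∀ j, AltProp a j (hh j)) : ∀ i : ℤ, a (hh (m+2) + (2*i)*2^(m+2))
    = if Even i then a (hh (m+2)) else -a (hh (m+2)) := by
  intro i
  have h := halt (m+2) i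
  rw [show hh (m+2) + i*2^(m+2+1) = hh (m+2) + (2*i)*2^(m+2) from by ring] at h
  exact h

lemma he_even (halt : ∀ j, AltProp a j (hh j)) : ∀ l : ℤ, a (hh (m+3) + (2*l)*2^(m+3))
    = if Even l then a (hh (m+3)) else -a (hh (m+3)) := by
  intro l
  have h := halt (m+3) l
  rw [show hh (m+3) + l*2^(m+3+1) = hh (m+3) + (2*l)*2^(m+3) from by ring] at h
  exact h

lemma hg_odd (hβ : hh (m+2) = hh (m+1) + 2^(m+1) + cb * 2^(m+2)) : ∀ j : ℤ, a (hh (m+1) + (2*j+1)*2^(m+1))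
    = a (hh (m+2) + (j-cb)*2^(m+2)) := by
  intro j; congr 1; rw [hβ]; ring

lemma hf_odd (hγ : hh (m+3) = hh (m+2) + 2^(m+2) + cc * 2^(m+3)) : ∀ i : ℤ, a (hh (m+2) + (2*i+1)*2^(m+2))
    = a (hh (m+3) + (i-cc)*2^(m+3)) := by
  intro i; congr 1; rw [hγ]; ring

lemma eBothEven (hpm : PM a) (halt : ∀ j, AltProp a j (hh j)) : ∀ s, (s = 1 ∨ s = -1) → ∃ l : ℤ, a (hh (m+3) + (2*l)*2^(m+3)) = s := by
  intro s hs
  rcases pickIf (a (hh (m+3))) s (hpm _) hs with h | h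
  · exact ⟨0, by rw [he_even halt, if_pos ⟨0, by ring⟩, h]⟩
  · exact ⟨1, by rw [he_even halt, if_neg (by rintro ⟨r, hr⟩; omega), h]⟩

lemma eBothOdd (hpm : PM a) (halt : ∀ j, AltProp a j (hh j)) (hδ : hh (m+4) = hh (m+3) + 2^(m+3) + cd * 2^(m+4)) : ∀ s, (s = 1 ∨ s = -1) → ∃ l : ℤ, a (hh (m+3) + (2*l+1)*2^(m+3)) = s := by
  intro s hs
  have e0 : a (hh (m+3) + (2*cd+1)*2^(m+3)) = a (hh (m+4)) := by
    congr 1; rw [hδ]; ring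
  have e2 : a (hh (m+3) + (2*(cd+2)+1)*2^(m+3)) = -a (hh (m+4)) := by
    have h := halt (m+4) 1
    rw [if_neg (by rintro ⟨r, hr⟩; omega)] at h
    rw [← h]; congr 1; rw [hδ]; ring
  rcases pickIf (a (hh (m+4))) s (hpm _) hs with h | h
  · exact ⟨cd, by rw [e0, h]⟩
  · exact ⟨cd+2, by rw [e2, h]⟩

lemma fBothEven (hpm : PM a) (halt : ∀ j, AltProp a j (hh j)) : ∀ s, (s = 1 ∨ s = -1) → ∃ i : ℤ, a (hh (m+2) + (2*i)*2^(m+2)) = s := by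
  intro s hs
  rcases pickIf (a (hh (m+2))) s (hpm _) hs with h | h
  · exact ⟨0, by rw [hf_even halt, if_pos ⟨0, by ring⟩, h]⟩
  · exact ⟨1, by rw [hf_even halt, if_neg (by rintro ⟨r, hr⟩; omega), h]⟩

lemma fBothOdd (hpm : PM a) (halt : ∀ j, AltProp a j (hh j)) (hγ : hh (m+3) = hh (m+2) + 2^(m+2) + cc * 2^(m+3)) : ∀ s, (s = 1 ∨ s = -1) → ∃ i : ℤ, a (hh (m+2) + (2*i+1)*2^(m+2)) = s := by
  intro s hs
  obtain ⟨l, hl⟩ := eBothEven hpm halt s hs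
  refine ⟨2*l + cc, ?_⟩
  rw [hf_odd (a := a) hγ, show (2*l+cc) - cc = 2*l from by ring]
  exact hl

/-- pair lemma, even position: f(2i)=s, f(2i+1)=-s -/
lemma fPairEven (hpm : PM a) (halt : ∀ j, AltProp a j (hh j)) (hγ : hh (m+3) = hh (m+2) + 2^(m+2) + cc * 2^(m+3)) (hδ : hh (m+4) = hh (m+3) + 2^(m+3) + cd * 2^(m+4)) : ∀ s, (s = 1 ∨ s = -1) → ∃ i : ℤ,
    a (hh (m+2) + (2*i)*2^(m+2)) = s ∧ a (hh (m+2) + (2*i+1)*2^(m+2)) = -s := by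
  intro s hs
  have hns : -s = 1 ∨ -s = -1 := by omega
  rcases pickIf (a (hh (m+2))) s (hpm _) hs with h | h
  · -- need Even i ; i ≡ 0 mod 2
    rcases Int.even_or_odd' cc with ⟨c, hc | hc⟩
    · -- cc even : i = cc + 2l, even iff ... need i even: i - cc even: use eBothEven
      obtain ⟨l, hl⟩ := eBothEven hpm halt (-s) hns
      refine ⟨cc + 2*l, ?_, ?_⟩
      · rw [hf_even halt, if_pos ⟨c+l, by omega⟩, h]
      · rw [hf_odd (a := a) hγ, show (cc+2*l) - cc = 2*l from by ring]; exact hl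
    · -- cc odd : need i even, i - cc odd: use eBothOdd
      obtain ⟨l, hl⟩ := eBothOdd hpm halt hδ (-s) hns
      refine ⟨cc + (2*l+1), ?_, ?_⟩
      · rw [hf_even halt, if_pos ⟨c+l+1, by omega⟩, h]
      · rw [hf_odd (a := a) hγ, show (cc+(2*l+1)) - cc = 2*l+1 from by ring]; exact hl
  · -- need i odd
    rcases Int.even_or_odd' cc with ⟨c, hc | hc⟩
    · obtain ⟨l, hl⟩ := eBothOdd hpm halt hδ (-s) hns
      refine ⟨cc + (2*l+1), ?_, ?_⟩
      · rw [hf_even halt, if_neg (by rintro ⟨r, hr⟩; omega), h]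
      · rw [hf_odd (a := a) hγ, show (cc+(2*l+1)) - cc = 2*l+1 from by ring]; exact hl
    · obtain ⟨l, hl⟩ := eBothEven hpm halt (-s) hns
      refine ⟨cc + 2*l, ?_, ?_⟩
      · rw [hf_even halt, if_neg (by rintro ⟨r, hr⟩; omega), h]
      · rw [hf_odd (a := a) hγ, show (cc+2*l) - cc = 2*l from by ring]; exact hl

/-- pair lemma, odd position: f(2i+1)=s, f(2(i+1))=-s -/
lemma fPairOdd (hpm : PM a) (halt : ∀ j, AltProp a j (hh j)) (hγ : hh (m+3) = hh (m+2) + 2^(m+2) + cc * 2^(m+3)) (hδ : hh (m+4) = hh (m+3) + 2^(m+3) + cd * 2^(m+4)) : ∀ s, (s = 1 ∨ s = -1) → ∃ i : ℤ,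
    a (hh (m+2) + (2*i+1)*2^(m+2)) = s ∧ a (hh (m+2) + (2*(i+1))*2^(m+2)) = -s := by
  intro s hs
  rcases pickIf (a (hh (m+2))) (-s) (hpm _) (by omega) with h | h
  · -- f(2(i+1)) = -s needs Even (i+1), i odd
    rcases Int.even_or_odd' cc with ⟨c, hc | hc⟩
    · obtain ⟨l, hl⟩ := eBothOdd hpm halt hδ s hs
      refine ⟨cc + (2*l+1), ?_, ?_⟩
      · rw [hf_odd (a := a) hγ, show (cc+(2*l+1)) - cc = 2*l+1 from by ring]; exact hl
      · rw [hf_even halt, if_pos ⟨c+l+1, by omega⟩, h]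
    · obtain ⟨l, hl⟩ := eBothEven hpm halt s hs
      refine ⟨cc + 2*l, ?_, ?_⟩
      · rw [hf_odd (a := a) hγ, show (cc+2*l) - cc = 2*l from by ring]; exact hl
      · rw [hf_even halt, if_pos ⟨c+l+1, by omega⟩, h]
  · -- -s = -A2 : f(2(i+1)) = -s needs ¬Even (i+1), i even
    rcases Int.even_or_odd' cc with ⟨c, hc | hc⟩
    · obtain ⟨l, hl⟩ := eBothEven hpm halt s hs
      refine ⟨cc + 2*l, ?_, ?_⟩
      · rw [hf_odd (a := a) hγ, show (cc+2*l) - cc = 2*l from by ring]; exact hl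
      · rw [hf_even halt, if_neg (by rintro ⟨r, hr⟩; omega)]; omega
    · obtain ⟨l, hl⟩ := eBothOdd hpm halt hδ s hs
      refine ⟨cc + (2*l+1), ?_, ?_⟩
      · rw [hf_odd (a := a) hγ, show (cc+(2*l+1)) - cc = 2*l+1 from by ring]; exact hl
      · rw [hf_even halt, if_neg (by rintro ⟨r, hr⟩; omega)]; omega

lemma GPeven (hpm : PM a) (halt : ∀ j, AltProp a j (hh j)) (hβ : hh (m+2) = hh (m+1) + 2^(m+1) + cb * 2^(m+2)) (hγ : hh (m+3) = hh (m+2) + 2^(m+2) + cc * 2^(m+3)) (hδ : hh (m+4) = hh (m+3) + 2^(m+3) + cd * 2^(m+4)) : ∀ σ₂ σ₃, (σ₂ = 1 ∨ σ₂ = -1) → (σ₃ = 1 ∨ σ₃ = -1) → ∃ J : ℤ,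
    a (hh (m+1) + (2*J)*2^(m+1)) = σ₂ ∧
    a (hh (m+1) + (2*J+1)*2^(m+1)) = σ₃ ∧
    a (hh (m+1) + (2*(J+1))*2^(m+1)) = -σ₂ := by
  intro σ₂ σ₃ h2 h3
  rcases pickIf (a (hh (m+1))) σ₂ (hpm _) h2 with h | h
  · -- σ₂ = A1 : need Even J
    rcases Int.even_or_odd' cb with ⟨b, hb | hb⟩
    · obtain ⟨w, hw⟩ := fBothEven hpm halt σ₃ h3
      refine ⟨cb + 2*w, ?_, ?_, ?_⟩
      · rw [hg_even halt, if_pos ⟨b+w, by omega⟩, h]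
      · rw [hg_odd (a := a) hβ, show (cb+2*w) - cb = 2*w from by ring]; exact hw
      · rw [hg_even halt, if_neg (by rintro ⟨r, hr⟩; omega)]; omega
    · obtain ⟨w, hw⟩ := fBothOdd hpm halt hγ σ₃ h3
      refine ⟨cb + (2*w+1), ?_, ?_, ?_⟩
      · rw [hg_even halt, if_pos ⟨b+w+1, by omega⟩, h]
      · rw [hg_odd (a := a) hβ, show (cb+(2*w+1)) - cb = 2*w+1 from by ring]; exact hw
      · rw [hg_even halt, if_neg (by rintro ⟨r, hr⟩; omega)]; omega
  · -- σ₂ = -A1 : need J odd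
    rcases Int.even_or_odd' cb with ⟨b, hb | hb⟩
    · obtain ⟨w, hw⟩ := fBothOdd hpm halt hγ σ₃ h3
      refine ⟨cb + (2*w+1), ?_, ?_, ?_⟩
      · rw [hg_even halt, if_neg (by rintro ⟨r, hr⟩; omega), h]
      · rw [hg_odd (a := a) hβ, show (cb+(2*w+1)) - cb = 2*w+1 from by ring]; exact hw
      · rw [hg_even halt, if_pos ⟨b+w+1, by omega⟩]; omega
    · obtain ⟨w, hw⟩ := fBothEven hpm halt σ₃ h3
      refine ⟨cb + 2*w, ?_, ?_, ?_⟩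
      · rw [hg_even halt, if_neg (by rintro ⟨r, hr⟩; omega), h]
      · rw [hg_odd (a := a) hβ, show (cb+2*w) - cb = 2*w from by ring]; exact hw
      · rw [hg_even halt, if_pos ⟨b+w+1, by omega⟩]; omega

lemma GPodd (hpm : PM a) (halt : ∀ j, AltProp a j (hh j)) (hβ : hh (m+2) = hh (m+1) + 2^(m+1) + cb * 2^(m+2)) (hγ : hh (m+3) = hh (m+2) + 2^(m+2) + cc * 2^(m+3)) (hδ : hh (m+4) = hh (m+3) + 2^(m+3) + cd * 2^(m+4)) : ∀ σ₂ σ₃, (σ₂ = 1 ∨ σ₂ = -1) → (σ₃ = 1 ∨ σ₃ = -1) → ∃ J : ℤ,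
    a (hh (m+1) + (2*J+1)*2^(m+1)) = σ₂ ∧
    a (hh (m+1) + (2*(J+1))*2^(m+1)) = σ₃ ∧
    a (hh (m+1) + (2*(J+1)+1)*2^(m+1)) = -σ₂ := by
  intro σ₂ σ₃ h2 h3
  rcases pickIf (a (hh (m+1))) σ₃ (hpm _) h3 with h | h
  · -- σ₃ = A1 : need Even (J+1), J odd; w = J - cb
    rcases Int.even_or_odd' cb with ⟨b, hb | hb⟩
    · -- cb even, J odd, w odd : fPairOdd
      obtain ⟨i, hi1, hi2⟩ := fPairOdd hpm halt hγ hδ σ₂ h2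
      refine ⟨cb + (2*i+1), ?_, ?_, ?_⟩
      · rw [hg_odd (a := a) hβ, show (cb+(2*i+1)) - cb = 2*i+1 from by ring]; exact hi1
      · rw [hg_even halt, if_pos ⟨b+i+1, by omega⟩, h]
      · rw [hg_odd (a := a) hβ, show (cb+(2*i+1)+1) - cb = 2*(i+1) from by ring]; exact hi2
    · -- cb odd, J odd, w even : fPairEven
      obtain ⟨i, hi1, hi2⟩ := fPairEven hpm halt hγ hδ σ₂ h2
      refine ⟨cb + 2*i, ?_, ?_, ?_⟩
      · rw [hg_odd (a := a) hβ, show (cb+2*i) - cb = 2*i from by ring]; exact hi1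
      · rw [hg_even halt, if_pos ⟨b+i+1, by omega⟩, h]
      · rw [hg_odd (a := a) hβ, show (cb+2*i+1) - cb = 2*i+1 from by ring]; exact hi2
  · -- σ₃ = -A1 : need ¬Even (J+1), J even
    rcases Int.even_or_odd' cb with ⟨b, hb | hb⟩
    · obtain ⟨i, hi1, hi2⟩ := fPairEven hpm halt hγ hδ σ₂ h2
      refine ⟨cb + 2*i, ?_, ?_, ?_⟩
      · rw [hg_odd (a := a) hβ, show (cb+2*i) - cb = 2*i from by ring]; exact hi1
      · rw [hg_even halt, if_neg (by rintro ⟨r, hr⟩; omega), h]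
      · rw [hg_odd (a := a) hβ, show (cb+2*i+1) - cb = 2*i+1 from by ring]; exact hi2
    · obtain ⟨i, hi1, hi2⟩ := fPairOdd hpm halt hγ hδ σ₂ h2
      refine ⟨cb + (2*i+1), ?_, ?_, ?_⟩
      · rw [hg_odd (a := a) hβ, show (cb+(2*i+1)) - cb = 2*i+1 from by ring]; exact hi1
      · rw [hg_even halt, if_neg (by rintro ⟨r, hr⟩; omega), h]
      · rw [hg_odd (a := a) hβ, show (cb+(2*i+1)+1) - cb = 2*(i+1) from by ring]; exact hi2

lemma exists_t (hpm : PM a) (halt : ∀ j, AltProp a j (hh j)) (hβ : hh (m+2) = hh (m+1) + 2^(m+1) + cb * 2^(m+2)) (hγ : hh (m+3) = hh (m+2) + 2^(m+2) + cc * 2^(m+3)) (hδ : hh (m+4) = hh (m+3) + 2^(m+3) + cd * 2^(m+4)) {cm : ℤ} (hcm : hh (m+1) = hh m + 2^m + cm * 2^(m+1)) :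
    ∀ σ₁ σ₂ σ₃, (σ₁ = 1 ∨ σ₁ = -1) → (σ₂ = 1 ∨ σ₂ = -1) → (σ₃ = 1 ∨ σ₃ = -1) →
    ∃ t : ℤ,
      a (hh (m+1) + (t-1)*2^(m+1) + 2^m) = σ₁ ∧
      a (hh (m+1) + t*2^(m+1)) = σ₂ ∧
      a (hh (m+1) + (t+1)*2^(m+1)) = σ₃ ∧
      a (hh (m+1) + (t+2)*2^(m+1)) = -σ₂ := by
  intro σ₁ σ₂ σ₃ h1 h2 h3
  have pos1 : ∀ t : ℤ, hh (m+1) + (t-1)*2^(m+1) + 2^m = hh m + (cm + t)*2^(m+1) := by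
    intro t; rw [hcm]; ring
  rcases pickIf (a (hh m)) σ₁ (hpm _) h1 with hσ | hσ
  · -- σ₁ = a (hh m) : need Even (cm + t)
    rcases Int.even_or_odd' cm with ⟨d, hd | hd⟩
    · -- cm even : t even
      obtain ⟨J, p2, p3, p4⟩ := GPeven hpm halt hβ hγ hδ σ₂ σ₃ h2 h3
      refine ⟨2*J, ?_, ?_, ?_, ?_⟩
      · rw [pos1, halt m (cm + 2*J), if_pos ⟨d+J, by omega⟩, hσ]
      · exact p2
      · exact p3
      · rw [show (2*J+2 : ℤ)*2^(m+1) = (2*(J+1))*2^(m+1) from by ring]; exact p4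
    · -- cm odd : t odd
      obtain ⟨J, p2, p3, p4⟩ := GPodd hpm halt hβ hγ hδ σ₂ σ₃ h2 h3
      refine ⟨2*J+1, ?_, ?_, ?_, ?_⟩
      · rw [pos1, halt m (cm + (2*J+1)), if_pos ⟨d+J+1, by omega⟩, hσ]
      · exact p2
      · rw [show (2*J+1+1 : ℤ)*2^(m+1) = (2*(J+1))*2^(m+1) from by ring]; exact p3
      · rw [show (2*J+1+2 : ℤ)*2^(m+1) = (2*(J+1)+1)*2^(m+1) from by ring]; exact p4
  · -- σ₁ = -a (hh m) : need ¬Even (cm + t)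
    rcases Int.even_or_odd' cm with ⟨d, hd | hd⟩
    · obtain ⟨J, p2, p3, p4⟩ := GPodd hpm halt hβ hγ hδ σ₂ σ₃ h2 h3
      refine ⟨2*J+1, ?_, ?_, ?_, ?_⟩
      · rw [pos1, halt m (cm + (2*J+1)), if_neg (by rintro ⟨r, hr⟩; omega), hσ]
      · exact p2
      · rw [show (2*J+1+1 : ℤ)*2^(m+1) = (2*(J+1))*2^(m+1) from by ring]; exact p3
      · rw [show (2*J+1+2 : ℤ)*2^(m+1) = (2*(J+1)+1)*2^(m+1) from by ring]; exact p4
    · obtain ⟨J, p2, p3, p4⟩ := GPeven hpm halt hβ hγ hδ σ₂ σ₃ h2 h3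
      refine ⟨2*J, ?_, ?_, ?_, ?_⟩
      · rw [pos1, halt m (cm + 2*J), if_neg (by rintro ⟨r, hr⟩; omega), hσ]
      · exact p2
      · exact p3
      · rw [show (2*J+2 : ℤ)*2^(m+1) = (2*(J+1))*2^(m+1) from by ring]; exact p4


end
end S16

theorem statement16 (a : ℤ → ℤ) (ha : CompleteFold a) (n : ℕ) (hn : 3 ≤ n) :
    Set.ncard {T : List ℤ | IsFold n T ∧ IsSubword a T} = 8 := by
  classical
  obtain ⟨m, rfl⟩ : ∃ m, n = m + 3 := ⟨n - 3, by omega⟩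
  obtain ⟨hpm, hex⟩ := ha
  choose hh halt using hex
  obtain ⟨cm, hcm⟩ := S16.succ_class hpm halt m (m+1) (by omega)
  obtain ⟨cb, hβ⟩ := S16.succ_class hpm halt (m+1) (m+2) (by omega)
  obtain ⟨cc, hγ⟩ := S16.succ_class hpm halt (m+2) (m+3) (by omega)
  obtain ⟨cd, hδ⟩ := S16.succ_class hpm halt (m+3) (m+4) (by omega)
  have hp0 : 1 ≤ (2:ℕ)^m := Nat.one_le_two_pow
  have hp1 : (2:ℕ)^(m+1) = 2*2^m := by ring
  have hp2 : (2:ℕ)^(m+2) = 4*2^m := by ring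
  have hp3 : (2:ℕ)^(m+3) = 8*2^m := by ring
  -- membership characterization
  have hmem : ∀ T : List ℤ, (IsFold (m+3) T ∧ IsSubword a T) ↔
      ∃ h : ℤ, IsFold (m+3) (subwordAt a h (2^(m+3)-1)) ∧ T = subwordAt a h (2^(m+3)-1) := by
    intro T
    constructor
    · rintro ⟨hf, h, hsub⟩
      have hlen : T.length = 2^(m+3) - 1 := (S16.char_fwd hf).1
      rw [hlen] at hsub
      exact ⟨h, hsub ▸ hf, hsub⟩
    · rintro ⟨h, hf, rfl⟩
      refine ⟨hf, h, ?_⟩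
      rw [S16.subword_length]
  -- the triple of distinguished letters
  set tri : List ℤ → ℤ × ℤ × ℤ := fun T =>
    (T.getD (2^m - 1) 0, T.getD (2^(m+1) - 1) 0, T.getD (2^(m+2) - 1) 0) with htri
  have tri_W : ∀ h : ℤ, tri (subwordAt a h (2^(m+3)-1))
      = (a (h + 2^m), a (h + 2^(m+1)), a (h + 2^(m+2))) := by
    intro h
    have comp : ∀ p : ℕ, p ≤ m + 2 →
        (subwordAt a h (2^(m+3)-1)).getD (2^p - 1) 0 = a (h + 2^p) := by
      intro p hp
      have hple : (2:ℕ)^p ≤ 2^(m+2) := Nat.pow_le_pow_right (by norm_num) hp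
      have h1 : S16.val (subwordAt a h (2^(m+3)-1)) (2^p) = a (h + (2^p : ℕ)) :=
        S16.val_subword a h _ _ Nat.one_le_two_pow (by omega)
      unfold S16.val at h1
      rw [h1]
      congr 1
    simp only [htri]
    rw [comp m (by omega), comp (m+1) (by omega), comp (m+2) (by omega)]
  -- injectivity on good windows
  have key_inj : ∀ h h' : ℤ, IsFold (m+3) (subwordAt a h (2^(m+3)-1)) →
      IsFold (m+3) (subwordAt a h' (2^(m+3)-1)) →
      tri (subwordAt a h (2^(m+3)-1)) = tri (subwordAt a h' (2^(m+3)-1)) →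
      subwordAt a h (2^(m+3)-1) = subwordAt a h' (2^(m+3)-1) := by
    intro h h' hf hf' htr
    rw [tri_W, tri_W, Prod.mk.injEq, Prod.mk.injEq] at htr
    obtain ⟨t1, t2, t3⟩ := htr
    have hdet := S16.letters_det hpm halt h h' hf hf' t1 t2 t3
    apply List.ext_getElem (by rw [S16.subword_length, S16.subword_length])
    intro i h1 h2
    rw [S16.subword_length] at h1
    have e1 : ∀ g : ℤ, ∀ (hg : i < (subwordAt a g (2^(m+3)-1)).length),
        (subwordAt a g (2^(m+3)-1))[i] = a (g + (((i+1 : ℕ)) : ℤ)) := by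
      intro g hg
      have hg' : i < (2^(m+3)-1) := by rwa [S16.subword_length] at hg
      rw [List.getElem_of_eq (S16.subword_eq a g _) hg]
      rw [List.getElem_map, List.getElem_range]
      congr 1
      push_cast
      ring
    rw [e1 h _, e1 h' _]
    exact hdet (i+1) (by omega) (by omega)
  -- achievability
  have key_ach : ∀ σ₁ σ₂ σ₃ : ℤ, (σ₁ = 1 ∨ σ₁ = -1) → (σ₂ = 1 ∨ σ₂ = -1) →
      (σ₃ = 1 ∨ σ₃ = -1) → ∃ h : ℤ, IsFold (m+3) (subwordAt a h (2^(m+3)-1)) ∧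
        tri (subwordAt a h (2^(m+3)-1)) = (σ₁, σ₂, σ₃) := by
    intro σ₁ σ₂ σ₃ h1 h2 h3
    obtain ⟨t, q1, q2, q3, q4⟩ := S16.exists_t hpm halt hβ hγ hδ hcm σ₁ σ₂ σ₃ h1 h2 h3
    refine ⟨hh (m+1) + (t-1)*2^(m+1), ?_, ?_⟩
    · apply S16.family_good hpm halt
      · intro p hp
        obtain ⟨cp, hcp⟩ := S16.succ_class hpm halt p (m+1) (by omega)
        refine ⟨1 + cp + (t-1)*2^(m-p), ?_⟩
        rw [hcp]
        have hpow2 : (2:ℤ)^(m-p) * 2^(p+1) = 2^(m+1) := by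
          rw [← pow_add]; congr 1; omega
        linear_combination (1-t) * hpow2
      · rw [show hh (m+1) + (t-1)*2^(m+1) + 3*2^(m+1) = hh (m+1) + (t+2)*2^(m+1) from by
              ring,
            show hh (m+1) + (t-1)*2^(m+1) + (2:ℤ)^(m+1) = hh (m+1) + t*2^(m+1) from by ring,
            q4, q2]
    · rw [tri_W, Prod.mk.injEq, Prod.mk.injEq]
      refine ⟨q1, ?_, ?_⟩
      · rw [show hh (m+1) + (t-1)*2^(m+1) + (2:ℤ)^(m+1) = hh (m+1) + t*2^(m+1) from by ring]
        exact q2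
      · rw [show hh (m+1) + (t-1)*2^(m+1) + (2:ℤ)^(m+2) = hh (m+1) + (t+1)*2^(m+1) from by
              ring]
        exact q3
  -- conclude by counting
  have hinjOn : Set.InjOn tri {T : List ℤ | IsFold (m+3) T ∧ IsSubword a T} := by
    intro T hT T' hT' htr
    obtain ⟨h, hf, rfl⟩ := (hmem T).mp hT
    obtain ⟨h', hf', rfl⟩ := (hmem T').mp hT'
    exact key_inj h h' hf hf' htr
  have himg : tri '' {T : List ℤ | IsFold (m+3) T ∧ IsSubword a T}
      = (↑(({1,-1} : Finset ℤ) ×ˢ (({1,-1} : Finset ℤ) ×ˢ ({1,-1} : Finset ℤ))) :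
          Set (ℤ × ℤ × ℤ)) := by
    ext σ
    simp only [Set.mem_image, Set.mem_setOf_eq, Finset.coe_product, Set.mem_prod,
      Finset.coe_insert, Finset.coe_singleton, Set.mem_insert_iff, Set.mem_singleton_iff]
    constructor
    · rintro ⟨T, hT, rfl⟩
      obtain ⟨h, hf, rfl⟩ := (hmem T).mp hT
      rw [tri_W]
      exact ⟨hpm _, hpm _, hpm _⟩
    · intro hσ
      obtain ⟨σ₁, σ₂, σ₃⟩ := σ
      obtain ⟨hσ1, hσ2, hσ3⟩ := hσ
      obtain ⟨h, hf, htr⟩ := key_ach σ₁ σ₂ σ₃ hσ1 hσ2 hσ3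
      exact ⟨_, (hmem _).mpr ⟨h, hf, rfl⟩, htr⟩
  calc (Set.ncard {T : List ℤ | IsFold (m+3) T ∧ IsSubword a T})
      = (tri '' {T : List ℤ | IsFold (m+3) T ∧ IsSubword a T}).ncard :=
        (Set.ncard_image_of_injOn hinjOn).symm
    _ = 8 := by rw [himg, Set.ncard_coe_finset]; decide
end

section
/- Every finite folding curve is self-avoiding: a lattice path in ℤ² whose turn sequence is a finite folding sequence visits no unit edge of ℤ² twice and crosses itself nowhere (i.e., the associated sequence of unit edges are pairwise distinct and any two non-consecutive edges are disjoint as closed segments, except for the rounded-corner interpretation at shared lattice points where the curve does not actually touch itself). -/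
namespace Statement17Aux

/-- Unnormalized inverse of the diagonal map. -/
def psi (w : ℤ × ℤ) : ℤ × ℤ := (w.1 - w.2, w.1 + w.2)

/-- Diagonal-to-unit map (exact on even-coordinate-sum vectors). -/
def phi (w : ℤ × ℤ) : ℤ × ℤ := ((w.1 + w.2) / 2, (w.2 - w.1) / 2)

def IsDiag (w : ℤ × ℤ) : Prop := w = (1, 1) ∨ w = (1, -1) ∨ w = (-1, 1) ∨ w = (-1, -1)

lemma psi_add (x y : ℤ × ℤ) : psi (x + y) = psi x + psi y := by
  simp [psi, Prod.ext_iff]; constructor <;> ring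

lemma psi_neg (x : ℤ × ℤ) : psi (-x) = -psi x := by
  simp [psi, Prod.ext_iff]; constructor <;> ring

lemma psi_inj : Function.Injective psi := by
  intro x y h
  simp [psi, Prod.ext_iff] at h ⊢
  omega

lemma psi_rot (x : ℤ × ℤ) (e : ℤ) : psi (rot x e) = rot (psi x) e := by
  by_cases he : e = 1 <;> simp [rot, psi, he, Prod.ext_iff] <;> constructor <;> ring

lemma psi_phi_even {w : ℤ × ℤ} (hw : Even (w.1 + w.2)) : psi (phi w) = w := by
  obtain ⟨s, hs⟩ := hw
  simp only [psi, phi, Prod.ext_iff]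
  omega

lemma rot_add (x y : ℤ × ℤ) (e : ℤ) : rot (x + y) e = rot x e + rot y e := by
  by_cases he : e = 1 <;> simp [rot, he, Prod.ext_iff] <;> ring

lemma rot_neg (x : ℤ × ℤ) (e : ℤ) : rot (-x) e = -(rot x e) := by
  by_cases he : e = 1 <;> simp [rot, he, Prod.ext_iff]

lemma rot_rot_same (x : ℤ × ℤ) (e : ℤ) : rot (rot x e) e = -x := by
  by_cases he : e = 1 <;> simp [rot, he, Prod.ext_iff]

lemma rot_inv_left (x : ℤ × ℤ) {e : ℤ} (he : e = 1 ∨ e = -1) : rot (rot x e) (-e) = x := by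
  rcases he with he | he <;> subst he <;> norm_num [rot, Prod.ext_iff]

lemma rot_neg_arg (x : ℤ × ℤ) {e : ℤ} (he : e = 1 ∨ e = -1) : rot x (-e) = -(rot x e) := by
  rcases he with he | he <;> subst he <;> norm_num [rot, Prod.ext_iff]

lemma rot_unit {x : ℤ × ℤ} (hx : IsUnitVec x) (e : ℤ) : IsUnitVec (rot x e) := by
  by_cases he : e = 1 <;> rcases hx with h | h | h | h <;> subst h <;>
    simp [rot, he, IsUnitVec]

lemma rot_ne_self {x : ℤ × ℤ} (hx : IsUnitVec x) (e : ℤ) : rot x e ≠ x := by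
  by_cases he : e = 1 <;> rcases hx with h | h | h | h <;> subst h <;>
    simp [rot, he, Prod.ext_iff]

lemma rot_ne_neg_self {x : ℤ × ℤ} (hx : IsUnitVec x) (e : ℤ) : rot x e ≠ -x := by
  by_cases he : e = 1 <;> rcases hx with h | h | h | h <;> subst h <;>
    simp [rot, he, Prod.ext_iff]

lemma diag_of_unit {x : ℤ × ℤ} (hx : IsUnitVec x) (e : ℤ) : IsDiag (x + rot x e) := by
  by_cases he : e = 1 <;> rcases hx with h | h | h | h <;> subst h <;>
    simp [rot, he, IsDiag, Prod.ext_iff]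

lemma diag_ne_zero {x : ℤ × ℤ} (hx : IsDiag x) : x ≠ 0 := by
  rcases hx with h | h | h | h <;> subst h <;> decide

lemma psi_phi_diag {x : ℤ × ℤ} (hx : IsDiag x) : psi (phi x) = x := by
  rcases hx with h | h | h | h <;> subst h <;> decide

lemma phi_diag_unit {x : ℤ × ℤ} (hx : IsDiag x) : IsUnitVec (phi x) := by
  rcases hx with h | h | h | h <;> subst h <;> simp [phi, IsUnitVec]

end Statement17Aux
namespace Statement17Aux

lemma pw4_iff {α : Type*} (x1 x2 x3 x4 : α) :
    List.Pairwise (· ≠ ·) [x1, x2, x3, x4] ↔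
      x1 ≠ x2 ∧ x1 ≠ x3 ∧ x1 ≠ x4 ∧ x2 ≠ x3 ∧ x2 ≠ x4 ∧ x3 ≠ x4 := by
  simp [List.pairwise_cons]
  tauto

lemma pw4_map {α β : Type*} (F : α → β) (hF : Function.Injective F) {x1 x2 x3 x4 : α}
    (hp : List.Pairwise (· ≠ ·) [x1, x2, x3, x4]) :
    List.Pairwise (· ≠ ·) [F x1, F x2, F x3, F x4] := by
  rw [pw4_iff] at hp ⊢
  exact ⟨fun h => hp.1 (hF h), fun h => hp.2.1 (hF h), fun h => hp.2.2.1 (hF h),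
    fun h => hp.2.2.2.1 (hF h), fun h => hp.2.2.2.2.1 (hF h), fun h => hp.2.2.2.2.2 (hF h)⟩

end Statement17Aux
namespace Statement17Aux

lemma genEvenF (V d : ℤ → ℤ × ℤ) (hd : ∀ t, IsUnitVec (d t))
    (hV : ∀ t : ℤ, V (t + 1) = V t + d t) :
    ∀ t : ℤ, Even ((V t).1 + (V t).2 - ((V 0).1 + (V 0).2) - t) := by
  have key : ∀ t : ℤ, ∃ c : ℤ, (V (t+1)).1 + (V (t+1)).2 = (V t).1 + (V t).2 + (2*c + 1) := by
    intro t
    have h1 : (V (t+1)).1 = (V t).1 + (d t).1 := by rw [hV t]; rfl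
    have h2 : (V (t+1)).2 = (V t).2 + (d t).2 := by rw [hV t]; rfl
    rcases hd t with h | h | h | h <;> rw [h] at h1 h2 <;>
      [exact ⟨0, by omega⟩; exact ⟨0, by omega⟩; exact ⟨-1, by omega⟩; exact ⟨-1, by omega⟩]
  intro t
  induction t using Int.induction_on with
  | zero => simp
  | succ n ih =>
      obtain ⟨u, hu⟩ := ih
      obtain ⟨c, hc⟩ := key n
      exact ⟨u + c, by push_cast at *; omega⟩
  | pred n ih =>
      obtain ⟨u, hu⟩ := ih
      obtain ⟨c, hc⟩ := key (-(n:ℤ) - 1)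
      have : (-(n:ℤ) - 1) + 1 = -(n:ℤ) := by ring
      rw [this] at hc
      exact ⟨u - c, by push_cast at *; omega⟩

lemma genParity (V d : ℤ → ℤ × ℤ) (hd : ∀ t, IsUnitVec (d t))
    (hV : ∀ t : ℤ, V (t + 1) = V t + d t) {s t : ℤ} (h : V s = V t) : Even (s - t) := by
  obtain ⟨u, hu⟩ := genEvenF V d hd hV s
  obtain ⟨v, hv⟩ := genEvenF V d hd hV t
  rw [h] at hu
  exact ⟨v - u, by omega⟩

lemma genTwoStep (a : ℤ → ℤ) (V d : ℤ → ℤ × ℤ) (hpm : PM a) (hd : ∀ t, IsUnitVec (d t))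
    (hrec : ∀ t : ℤ, d (t + 1) = rot (d t) (a t))
    (hV : ∀ t : ℤ, V (t + 1) = V t + d t) (t : ℤ) : V (t + 2) ≠ V t := by
  intro hEq
  have h1 : V (t + 2) = V t + (d t + rot (d t) (a t)) := by
    have e1 := hV t
    have e2 := hV (t + 1)
    rw [hrec t] at e2
    rw [show t + 2 = t + 1 + 1 by ring, e2, e1]
    abel
  have h2 : d t + rot (d t) (a t) = 0 := by
    rw [hEq] at h1
    exact (left_eq_add.mp h1)
  exact diag_ne_zero (diag_of_unit (hd t) (a t)) h2

end Statement17Aux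
namespace Statement17Aux

lemma rot_key (x : ℤ × ℤ) (s t : ℤ) (hs : s = 1 ∨ s = -1) (ht : t = 1 ∨ t = -1) :
    rot (rot x s) t + rot (rot (rot x s) t) (-s) = rot (x + rot x s) t := by
  rcases hs with rfl | rfl <;> rcases ht with rfl | rfl <;>
    norm_num [rot, Prod.ext_iff] <;> ring_nf <;> omega

lemma renorm (a : ℤ → ℤ) (d V : ℤ → ℤ × ℤ) (CF : CompleteFold a)
    (hd : ∀ t, IsUnitVec (d t)) (hrec : ∀ t : ℤ, d (t + 1) = rot (d t) (a t))
    (hV : ∀ t : ℤ, V (t + 1) = V t + d t) :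
    ∃ (h : ℤ) (a' : ℤ → ℤ) (d' V' : ℤ → ℤ × ℤ),
      (∀ k : ℤ, a (h + 2*k) = if Even k then a h else -a h) ∧
      (∀ k : ℤ, a' k = a (h + 2*k + 1)) ∧
      CompleteFold a' ∧ (∀ k, IsUnitVec (d' k)) ∧
      (∀ k : ℤ, d' (k + 1) = rot (d' k) (a' k)) ∧
      (∀ k : ℤ, V' (k + 1) = V' k + d' k) ∧
      (∀ k : ℤ, psi (d' k) = d (h + 2*k) + d (h + 2*k + 1)) ∧
      (∀ k : ℤ, psi (V' k) = V (h + 2*k) - V h) := by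
  obtain ⟨PMa, CFalt⟩ := CF
  obtain ⟨h, Alt0⟩ := CFalt 0
  have alt : ∀ k : ℤ, a (h + 2*k) = if Even k then a h else -a h := by
    intro k
    have := Alt0 k
    rw [show h + k * 2^(0+1) = h + 2*k by ring] at this
    exact this
  refine ⟨h, fun k => a (h + 2*k + 1),
    fun k => phi (d (h + 2*k) + d (h + 2*k + 1)),
    fun k => phi (V (h + 2*k) - V h), alt, fun k => rfl, ?_, ?_, ?_, ?_, ?_, ?_⟩
  case _ => -- CompleteFold a'
    constructor
    · intro k; exact PMa _
    · intro n
      obtain ⟨hn, Hn⟩ := CFalt (n + 1)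
      have hodd : ¬ Even (hn - h) := by
        rintro ⟨u, hu⟩
        have e1 := Hn 1
        norm_num at e1
        have e2 := alt (u + 2^(n+1))
        have e3 := alt u
        rw [show h + 2*(u + 2^(n+1)) = hn + 1 * 2^(n+1+1) by
          rw [show hn = h + 2*u by omega]; ring] at e2
        rw [show h + 2*u = hn by omega] at e3
        have heven : Even (u + 2^(n+1)) ↔ Even u := by
          have : Even ((2:ℤ)^(n+1)) := ⟨2^n, by ring⟩
          constructor
          · intro hh; rcases this with ⟨p, hp⟩; rcases hh with ⟨q, hq⟩; exact ⟨q - p, by omega⟩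
          · intro hh; rcases this with ⟨p, hp⟩; rcases hh with ⟨q, hq⟩; exact ⟨q + p, by omega⟩
        rcases PMa hn with hp | hp <;> by_cases he : Even u <;>
          simp [he, heven, hp] at e1 e2 e3 <;> omega
      obtain ⟨u, hu⟩ : ∃ u, hn = h + 2*u + 1 := by
        rcases Int.even_or_odd (hn - h) with he | ⟨u, hu⟩
        · exact absurd he hodd
        · exact ⟨u, by omega⟩
      refine ⟨u, fun k => ?_⟩
      have := Hn k
      rw [show hn + k * 2^(n+1+1) = h + 2*(u + k * 2^(n+1)) + 1 by rw [hu]; ring] at this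
      rw [show hn = h + 2*u + 1 from hu] at this
      exact this
  case _ => -- unit
    intro k
    have hg : d (h + 2*k + 1) = rot (d (h + 2*k)) (a (h + 2*k)) := hrec (h + 2*k)
    exact phi_diag_unit (hg ▸ diag_of_unit (hd (h + 2*k)) (a (h + 2*k)))
  case _ => -- d' recurrence
    intro k
    have Ddiag : ∀ k : ℤ, IsDiag (d (h + 2*k) + d (h + 2*k + 1)) := by
      intro k
      have hg : d (h + 2*k + 1) = rot (d (h + 2*k)) (a (h + 2*k)) := hrec (h + 2*k)
      exact hg ▸ diag_of_unit (hd (h + 2*k)) (a (h + 2*k))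
    apply psi_inj
    rw [psi_rot, psi_phi_diag (Ddiag k), psi_phi_diag (Ddiag (k+1))]
    -- goal : d (h+2*(k+1)) + d (h+2*(k+1)+1) = rot (d (h+2*k) + d (h+2*k+1)) (a (h+2*k+1))
    have hg : d (h + 2*k + 1) = rot (d (h + 2*k)) (a (h + 2*k)) := hrec (h + 2*k)
    have hf1 : d (h + 2*(k+1)) = rot (d (h + 2*k + 1)) (a (h + 2*k + 1)) := by
      rw [show h + 2*(k+1) = (h + 2*k + 1) + 1 by ring]; exact hrec _
    have hg1 : d (h + 2*(k+1) + 1) = rot (d (h + 2*(k+1))) (a (h + 2*(k+1))) := hrec _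
    have hs2 : a (h + 2*(k+1)) = -(a (h + 2*k)) := by
      rw [alt k, alt (k+1)]
      by_cases he : Even k <;> simp [he, Int.even_add_one]
    rw [hg1, hf1, hg, hs2]
    exact rot_key (d (h + 2*k)) (a (h + 2*k)) (a (h + 2*k + 1)) (PMa _) (PMa _)
  case _ => -- V' recurrence
    intro k
    have Ddiag : IsDiag (d (h + 2*k) + d (h + 2*k + 1)) := by
      have hg : d (h + 2*k + 1) = rot (d (h + 2*k)) (a (h + 2*k)) := hrec (h + 2*k)
      exact hg ▸ diag_of_unit (hd (h + 2*k)) (a (h + 2*k))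
    have evenW : ∀ k : ℤ, Even ((V (h + 2*k) - V h).1 + (V (h + 2*k) - V h).2) := by
      intro k
      obtain ⟨u, hu⟩ := genEvenF V d hd hV (h + 2*k)
      obtain ⟨v, hv⟩ := genEvenF V d hd hV h
      exact ⟨u - v + k, by simp only [Prod.fst_sub, Prod.snd_sub]; omega⟩
    apply psi_inj
    rw [psi_add, psi_phi_even (evenW (k+1)), psi_phi_even (evenW k), psi_phi_diag Ddiag]
    have e1 := hV (h + 2*k)
    have e2 := hV (h + 2*k + 1)
    rw [show h + 2*(k+1) = (h + 2*k + 1) + 1 by ring, e2, e1]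
    abel
  case _ => -- psi d'
    intro k
    have hg : d (h + 2*k + 1) = rot (d (h + 2*k)) (a (h + 2*k)) := hrec (h + 2*k)
    exact psi_phi_diag (hg ▸ diag_of_unit (hd (h + 2*k)) (a (h + 2*k)))
  case _ => -- psi V'
    intro k
    apply psi_phi_even
    obtain ⟨u, hu⟩ := genEvenF V d hd hV (h + 2*k)
    obtain ⟨v, hv⟩ := genEvenF V d hd hV h
    exact ⟨u - v + k, by simp only [Prod.fst_sub, Prod.snd_sub]; omega⟩

end Statement17Aux
namespace Statement17Aux

lemma two_pow_odd_unique_aux (n1 : ℕ) (k1 : ℤ) (n2 : ℕ) (k2 : ℤ) (hle : n1 ≤ n2)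
    (heq : (2:ℤ)^n1 * (2*k1+1) = 2^n2 * (2*k2+1)) : n1 = n2 ∧ k1 = k2 := by
  set dd : ℕ := n2 - n1 with hdd
  have heq' : (2:ℤ)^n1 * (2*k1+1) = 2^n1 * (2^dd * (2*k2+1)) := by
    rw [heq, show n2 = n1 + dd by omega, pow_add]
    ring
  have h2 : (2*k1+1) = 2^dd * (2*k2+1) :=
    mul_left_cancel₀ (pow_ne_zero _ two_ne_zero) heq'
  rcases Nat.eq_zero_or_pos dd with hd | hd
  · rw [hd] at h2
    norm_num at h2
    omega
  · exfalso
    rw [show dd = (dd-1)+1 by omega, pow_succ] at h2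
    have h3 : 2*k1+1 = 2*((2:ℤ)^(dd-1)*(2*k2+1)) := by linear_combination h2
    omega

lemma two_pow_odd_unique (n1 : ℕ) (k1 : ℤ) (n2 : ℕ) (k2 : ℤ)
    (heq : (2:ℤ)^n1 * (2*k1+1) = 2^n2 * (2*k2+1)) : n1 = n2 ∧ k1 = k2 := by
  rcases le_total n1 n2 with h | h
  · exact two_pow_odd_unique_aux n1 k1 n2 k2 h heq
  · have := two_pow_odd_unique_aux n2 k2 n1 k1 h heq.symm
    omega

lemma nat_two_pow_odd_exists : ∀ q : ℕ, 1 ≤ q → ∃ e t : ℕ, q = 2^e * (2*t+1) := by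
  intro q
  induction q using Nat.strong_induction_on with
  | _ q ih =>
  intro h1
  rcases Nat.even_or_odd q with ⟨p, hp⟩ | ⟨p, hp⟩
  · obtain ⟨e, t, het⟩ := ih p (by omega) (by omega)
    exact ⟨e+1, t, by rw [hp, het]; ring⟩
  · exact ⟨0, p, by omega⟩

end Statement17Aux
namespace Statement17Aux

/-- 1-indexed entry of a word, default 0. -/
def val (S : List ℤ) (q : ℕ) : ℤ := S.getD (q - 1) 0

lemma negRev_length (S : List ℤ) : (negRev S).length = S.length := by simp [negRev]

lemma isFold_length {n : ℕ} {S : List ℤ} (hf : IsFold n S) : S.length = 2^n - 1 := by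
  induction hf with
  | zero => simp
  | succ n S ε hf he ih =>
      have h1 : 1 ≤ 2^n := Nat.one_le_two_pow
      have h2 : 2^(n+1) = 2*2^n := by ring
      simp [negRev, ih]
      omega

lemma isFold_mem {n : ℕ} {S : List ℤ} (hf : IsFold n S) : ∀ x ∈ S, x = 1 ∨ x = -1 := by
  induction hf with
  | zero => simp
  | succ n S ε hf he ih =>
      intro x hx
      rcases List.mem_append.mp hx with hx | hx
      · simp only [negRev, List.mem_reverse, List.mem_map] at hx
        obtain ⟨y, hy, hyx⟩ := hx
        rcases ih y hy with h | h <;> subst hyx <;> simp [h]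
      · rcases List.mem_cons.mp hx with hx | hx
        · subst hx; exact he
        · exact ih x hx

lemma val_pm {n : ℕ} {S : List ℤ} (hf : IsFold n S) {q : ℕ} (h1 : 1 ≤ q) (h2 : q ≤ S.length) :
    val S q = 1 ∨ val S q = -1 := by
  have hlt : q - 1 < S.length := by omega
  rw [val, List.getD_eq_getElem S 0 hlt]
  exact isFold_mem hf _ (S.getElem_mem hlt)

lemma val_negRev (S : List ℤ) {q : ℕ} (h1 : 1 ≤ q) (h2 : q ≤ S.length) :
    val (negRev S) q = -(val S (S.length + 1 - q)) := by
  have hlt : q - 1 < (negRev S).length := by rw [negRev_length]; omega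
  have hlt2 : S.length + 1 - q - 1 < S.length := by omega
  rw [val, val, List.getD_eq_getElem _ 0 hlt, List.getD_eq_getElem _ 0 hlt2]
  simp only [negRev]
  rw [List.getElem_reverse, List.getElem_map]
  congr 2
  simp only [List.length_map]
  omega

lemma valW_lt (S : List ℤ) (ε : ℤ) {q N : ℕ} (hN : S.length = N) (h1 : 1 ≤ q) (h2 : q ≤ N) :
    val (negRev S ++ ε :: S) q = -(val S (N + 1 - q)) := by
  have hlt : q - 1 < (negRev S).length := by rw [negRev_length, hN]; omega
  rw [val, List.getD_append _ _ _ _ hlt, ← val, val_negRev S h1 (by omega), hN]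

lemma valW_mid (S : List ℤ) (ε : ℤ) {N : ℕ} (hN : S.length = N) :
    val (negRev S ++ ε :: S) (N + 1) = ε := by
  rw [val, List.getD_append_right _ _ _ _ (by rw [negRev_length, hN]; omega)]
  rw [negRev_length, hN]
  simp

lemma valW_gt (S : List ℤ) (ε : ℤ) {q N : ℕ} (hN : S.length = N) (h1 : N + 2 ≤ q) :
    val (negRev S ++ ε :: S) q = val S (q - (N + 1)) := by
  rw [val, List.getD_append_right _ _ _ _ (by rw [negRev_length, hN]; omega)]
  rw [negRev_length, hN]
  rw [show q - 1 - N = (q - N - 2) + 1 by omega]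
  rw [List.getD_cons_succ]
  rw [val, show q - (N + 1) - 1 = q - N - 2 from by omega]

lemma npow_rel_odd {p q : ℕ} (h : Odd (p + q)) : (-1:ℤ)^p = -(-1:ℤ)^q := by
  rcases Nat.even_or_odd p with hp | hp <;> rcases Nat.even_or_odd q with hq | hq
  · exfalso; obtain ⟨r, hr⟩ := h; obtain ⟨s, hs⟩ := hp; obtain ⟨u, hu⟩ := hq; omega
  · simp [hp.neg_one_pow, hq.neg_one_pow]
  · simp [hp.neg_one_pow, hq.neg_one_pow]
  · exfalso; obtain ⟨r, hr⟩ := h; obtain ⟨s, hs⟩ := hp; obtain ⟨u, hu⟩ := hq; omega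

lemma npow_rel_even {p q : ℕ} (h : Even (p + q)) : (-1:ℤ)^p = (-1:ℤ)^q := by
  rcases Nat.even_or_odd p with hp | hp <;> rcases Nat.even_or_odd q with hq | hq
  · rw [hp.neg_one_pow, hq.neg_one_pow]
  · exfalso; obtain ⟨r, hr⟩ := h; obtain ⟨s, hs⟩ := hp; obtain ⟨u, hu⟩ := hq; omega
  · exfalso; obtain ⟨r, hr⟩ := h; obtain ⟨s, hs⟩ := hp; obtain ⟨u, hu⟩ := hq; omega
  · rw [hp.neg_one_pow, hq.neg_one_pow]

lemma valW_pow_aux {ν : ℕ} (S : List ℤ) (ε : ℤ) (hlen : S.length = 2^ν - 1)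
    (halt : ∀ e t : ℕ, 2^e * (2*t+1) ≤ 2^ν - 1 →
      val S (2^e * (2*t+1)) = (-1:ℤ)^t * val S (2^e))
    (e : ℕ) (he : e < ν) :
    val (negRev S ++ ε :: S) (2^e) = (-1:ℤ)^(2^(ν-e-1)) * val S (2^e) := by
  have h2n : 1 ≤ 2^ν := Nat.one_le_two_pow
  have h2e : 1 ≤ 2^e := Nat.one_le_two_pow
  have hA1 : 1 ≤ 2^(ν-e-1) := Nat.one_le_two_pow
  have hpow : (2:ℕ)^ν = 2^(e+1) * 2^(ν-e-1) := by rw [← pow_add]; congr 1; omega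
  have hqle : 2^e ≤ 2^ν - 1 := by
    have : (2:ℕ)^e < 2^ν := Nat.pow_lt_pow_right one_lt_two he
    omega
  rw [valW_lt S ε hlen (by omega) hqle]
  set t' : ℕ := 2^(ν-e-1) - 1 with ht'
  have hkey : 2^e * (2*t'+1) + 2^e = 2^ν := by
    have h1 : 2^e * (2*t'+1) + 2^e = 2^(e+1) * (t'+1) := by ring
    rw [h1, show t' + 1 = 2^(ν-e-1) by omega, ← pow_add]
    congr 1
    omega
  have harg : 2^ν - 1 + 1 - 2^e = 2^e * (2*t'+1) := by omega
  rw [harg, halt e t' (by omega)]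
  rw [show 2^(ν-e-1) = t' + 1 by omega, pow_succ]
  ring

lemma foldAlt {n : ℕ} {S : List ℤ} (hf : IsFold n S) : ∀ e t : ℕ,
    2^e * (2*t+1) ≤ 2^n - 1 → val S (2^e * (2*t+1)) = (-1:ℤ)^t * val S (2^e) := by
  induction hf with
  | zero =>
      intro e t hle
      exfalso
      have h1 : 1 ≤ 2^e := Nat.one_le_two_pow
      have : 1 ≤ 2^e * (2*t+1) := Nat.mul_pos (by omega) (by omega)
      omega
  | succ n S ε hf he ih =>
      intro e t hle
      have hN : S.length = 2^n - 1 := isFold_length hf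
      have h2n : 1 ≤ 2^n := Nat.one_le_two_pow
      have h2e : 1 ≤ 2^e := Nat.one_le_two_pow
      have h2succ : (2:ℕ)^(n+1) = 2*2^n := by ring
      have hq1 : 1 ≤ 2^e * (2*t+1) := Nat.mul_pos (by omega) (by omega)
      by_cases hcase : 2^e * (2*t+1) < 2^n
      · -- left (negRev) region
        have hen : e < n := by
          by_contra hc
          have : (2:ℕ)^n ≤ 2^e := Nat.pow_le_pow_right (by omega) (by omega)
          have : 2^e ≤ 2^e * (2*t+1) := Nat.le_mul_of_pos_right _ (by omega)
          omega
        have hA1 : 1 ≤ 2^(n-e-1) := Nat.one_le_two_pow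
        set A : ℕ := 2^(n-e-1) with hA
        have hpow : (2:ℕ)^n = 2^(e+1) * A := by rw [hA, ← pow_add]; congr 1; omega
        have htA : t < A := by
          have h1 : 2^e * (2*t+1) < 2^e * (2*A) := by
            rw [show 2^e * (2*A) = 2^(e+1) * A by ring, ← hpow]; exact hcase
          have h2 : 2*t+1 < 2*A := Nat.lt_of_mul_lt_mul_left h1
          omega
        set t'' : ℕ := A - 1 - t with ht''
        have hkey : 2^e * (2*t+1) + 2^e * (2*t''+1) = 2^n := by
          have h1 : 2^e * (2*t+1) + 2^e * (2*t''+1) = 2^(e+1) * (t + t'' + 1) := by ring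
          rw [h1, show t + t'' + 1 = A by omega, hpow]
        rw [valW_lt S ε hN hq1 (by omega)]
        have harg : 2^n - 1 + 1 - 2^e * (2*t+1) = 2^e * (2*t''+1) := by omega
        rw [harg, ih e t'' (by omega)]
        rw [valW_pow_aux S ε hN ih e hen, ← hA]
        have hsign : (-1:ℤ)^t'' = -((-1:ℤ)^t * (-1:ℤ)^A) := by
          rw [← pow_add]
          apply npow_rel_odd
          exact ⟨A - 1, by omega⟩
        rw [hsign]
        ring
      · by_cases hcase2 : 2^e * (2*t+1) = 2^n
        · -- middle
          have ht0 : t = 0 ∧ e = n := by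
            have hc := congrArg (fun x : ℕ => (x:ℤ)) hcase2
            push_cast at hc
            have := two_pow_odd_unique e (t:ℤ) n 0 (by linarith)
            omega
          obtain ⟨ht, he'⟩ := ht0
          subst ht; subst he'
          norm_num
        · -- right region
          have hqgt : 2^n < 2^e * (2*t+1) := by omega
          have hen : e < n := by
            rcases Nat.lt_or_ge e n with h | h
            · exact h
            · exfalso
              have hen' : e ≤ n := by
                have : (2:ℕ)^e ≤ 2^e * (2*t+1) := Nat.le_mul_of_pos_right _ (by omega)
                have h2 : (2:ℕ)^e < 2^(n+1) := by omega
                by_contra hc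
                have : (2:ℕ)^(n+1) ≤ 2^e := Nat.pow_le_pow_right (by omega) (by omega)
                omega
              have hee : e = n := by omega
              subst hee
              have : 2*t+1 < 2 := by
                have h1 : 2^e * (2*t+1) < 2^e * 2 := by
                  rw [show 2^e * 2 = 2^(e+1) by ring]
                  omega
                exact Nat.lt_of_mul_lt_mul_left h1
              have ht : t = 0 := by omega
              subst ht
              omega
          have hA1 : 1 ≤ 2^(n-e-1) := Nat.one_le_two_pow
          set A : ℕ := 2^(n-e-1) with hA
          have hpow : (2:ℕ)^n = 2^(e+1) * A := by rw [hA, ← pow_add]; congr 1; omega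
          have htA : A ≤ t := by
            have h1 : 2^e * (2*A) < 2^e * (2*t+1) := by
              rw [show 2^e * (2*A) = 2^(e+1) * A by ring, ← hpow]; exact hqgt
            have h2 : 2*A < 2*t+1 := Nat.lt_of_mul_lt_mul_left h1
            omega
          set t'' : ℕ := t - A with ht''
          have hkey : 2^e * (2*t''+1) + 2^n = 2^e * (2*t+1) := by
            have h1 : 2^e * (2*t''+1) + 2^(e+1) * A = 2^e * (2*(t''+A)+1) := by ring
            rw [hpow, h1, show t'' + A = t by omega]
          rw [valW_gt S ε hN (by omega)]
          have harg : 2^e * (2*t+1) - (2^n - 1 + 1) = 2^e * (2*t''+1) := by omega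
          rw [harg, ih e t'' (by omega)]
          rw [valW_pow_aux S ε hN ih e hen, ← hA]
          have hsign : (-1:ℤ)^t'' = (-1:ℤ)^t * (-1:ℤ)^A := by
            rw [← pow_add]
            apply npow_rel_even
            exact ⟨t, by omega⟩
          rw [hsign]
          ring

end Statement17Aux
namespace Statement17Aux

def tower (S : List ℤ) : ℕ → List ℤ
  | 0 => S
  | m+1 => negRev (tower S m) ++ (1:ℤ) :: tower S m

lemma tower_fold {n : ℕ} {S : List ℤ} (hf : IsFold n S) (m : ℕ) :
    IsFold (n + m) (tower S m) := by
  induction m with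
  | zero => exact hf
  | succ m ih => exact IsFold.succ _ _ 1 ih (Or.inl rfl)

/-- stable limit value at position `2^e`. -/
def gam (S : List ℤ) (n : ℕ) (e : ℕ) : ℤ := val (tower S (e + 2 - n)) (2^e)

lemma stabStep {ν : ℕ} {S' : List ℤ} (hf : IsFold ν S') (ε : ℤ) {e : ℕ} (he : e + 2 ≤ ν) :
    val (negRev S' ++ ε :: S') (2^e) = val S' (2^e) := by
  rw [valW_pow_aux S' ε (isFold_length hf) (foldAlt hf) e (by omega)]
  have heven : Even (2^(ν-e-1)) := ⟨2^(ν-e-2), by rw [← two_mul, ← pow_succ']; congr 1; omega⟩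
  rw [heven.neg_one_pow, one_mul]

lemma stabEdge {ν : ℕ} {S' : List ℤ} (hf : IsFold ν S') (ε : ℤ) {e : ℕ} (he : e + 1 = ν) :
    val (negRev S' ++ ε :: S') (2^e) = -(val S' (2^e)) := by
  rw [valW_pow_aux S' ε (isFold_length hf) (foldAlt hf) e (by omega)]
  rw [show ν - e - 1 = 0 by omega]
  norm_num

lemma stab {n : ℕ} {S : List ℤ} (hf : IsFold n S) :
    ∀ m e : ℕ, e + 2 ≤ n + m → val (tower S m) (2^e) = gam S n e := by
  intro m
  induction m with
  | zero =>
      intro e he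
      rw [gam, show e + 2 - n = 0 by omega]
  | succ m ih =>
      intro e he
      rcases Nat.lt_or_ge (e + 2) (n + m + 1) with hlt | hge
      · have : val (tower S (m+1)) (2^e) = val (tower S m) (2^e) := by
          show val (negRev (tower S m) ++ (1:ℤ) :: tower S m) (2^e) = _
          exact stabStep (tower_fold hf m) 1 (by omega)
        rw [this, ih e (by omega)]
      · have hm : e + 2 - n = m + 1 := by omega
        rw [gam, hm]

lemma stab_edge_S {n : ℕ} {S : List ℤ} (hf : IsFold n S) (hn : 1 ≤ n) :
    val S (2^(n-1)) = -(gam S n (n-1)) := by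
  have hm : (n-1) + 2 - n = 1 := by omega
  rw [gam, hm]
  have : val (tower S 1) (2^(n-1)) = -(val (tower S 0) (2^(n-1))) := by
    show val (negRev (tower S 0) ++ (1:ℤ) :: tower S 0) (2^(n-1)) = _
    exact stabEdge (tower_fold hf 0) 1 (by omega)
  rw [this, neg_neg]
  rfl

lemma gam_pm {n : ℕ} {S : List ℤ} (hf : IsFold n S) (e : ℕ) :
    gam S n e = 1 ∨ gam S n e = -1 := by
  rw [gam]
  have hf' : IsFold (n + (e + 2 - n)) (tower S (e+2-n)) := tower_fold hf _
  apply val_pm hf' (Nat.one_le_two_pow)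
  rw [isFold_length hf']
  have h1 : e < n + (e + 2 - n) := by omega
  have : (2:ℕ)^e < 2^(n + (e+2-n)) := Nat.pow_lt_pow_right one_lt_two h1
  omega

open Classical in
/-- A complete folding sequence with prescribed scale-constants `γ`. -/
noncomputable def foldSeq (γ : ℕ → ℤ) : ℤ → ℤ := fun h =>
  if H : ∃ p : ℕ × ℤ, h = 2^p.1 * (2*p.2+1) then
    (if Even H.choose.2 then γ H.choose.1 else -(γ H.choose.1)) else 1

lemma foldSeq_spec (γ : ℕ → ℤ) (e : ℕ) (k : ℤ) :
    foldSeq γ (2^e * (2*k+1)) = if Even k then γ e else -(γ e) := by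
  have hex : ∃ p : ℕ × ℤ, (2:ℤ)^e * (2*k+1) = 2^p.1 * (2*p.2+1) := ⟨(e, k), rfl⟩
  rw [foldSeq, dif_pos hex]
  obtain ⟨h1, h2⟩ := two_pow_odd_unique _ _ _ _ hex.choose_spec
  rw [← h1, ← h2]

lemma foldSeq_pm (γ : ℕ → ℤ) (hγ : ∀ e, γ e = 1 ∨ γ e = -1) : PM (foldSeq γ) := by
  intro h
  rw [foldSeq]
  by_cases H : ∃ p : ℕ × ℤ, h = 2^p.1 * (2*p.2+1)
  · rw [dif_pos H]
    rcases hγ H.choose.1 with h1 | h1 <;> by_cases he : Even H.choose.2 <;> simp [he, h1]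
  · rw [dif_neg H]
    left; rfl

lemma foldSeq_complete (γ : ℕ → ℤ) (hγ : ∀ e, γ e = 1 ∨ γ e = -1) :
    CompleteFold (foldSeq γ) := by
  refine ⟨foldSeq_pm γ hγ, fun n => ⟨2^n, fun k => ?_⟩⟩
  have h1 := foldSeq_spec γ n k
  have h2 := foldSeq_spec γ n 0
  norm_num at h2
  rw [show (2:ℤ)^n + k * 2^(n+1) = 2^n * (2*k+1) by rw [pow_succ]; ring, h1, h2]

/-- The compatibility of `foldSeq (gam S n)` with `S` placed at positions `[-(2^n-1), -1]`. -/
lemma aMatch {n : ℕ} {S : List ℤ} (hf : IsFold n S) (q : ℕ) (h1 : 1 ≤ q) (h2 : q ≤ 2^n - 1) :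
    foldSeq (gam S n) ((q:ℤ) - 2^n) = val S q := by
  obtain ⟨e, t, hq⟩ := nat_two_pow_odd_exists q h1
  have h2e : 1 ≤ (2:ℕ)^e := Nat.one_le_two_pow
  have hen : e < n := by
    by_contra hc
    have hh1 : (2:ℕ)^n ≤ 2^e := Nat.pow_le_pow_right (by omega) (by omega)
    have hh2 : 2^e ≤ q := by rw [hq]; exact Nat.le_mul_of_pos_right _ (by omega)
    have h2n : 1 ≤ (2:ℕ)^n := Nat.one_le_two_pow
    omega
  have hA1 : 1 ≤ (2:ℕ)^(n-e-1) := Nat.one_le_two_pow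
  set A : ℕ := 2^(n-e-1) with hA
  have hpow : (2:ℕ)^n = 2^(e+1) * A := by rw [hA, ← pow_add]; congr 1; omega
  have hz : (q:ℤ) - 2^n = 2^e * (2*((t:ℤ) - A) + 1) := by
    have hc1 := congrArg (fun x : ℕ => (x:ℤ)) hq
    have hc2 := congrArg (fun x : ℕ => (x:ℤ)) hpow
    push_cast at hc1 hc2
    rw [hc1, hc2]
    ring
  rw [hz, foldSeq_spec]
  have hval := foldAlt hf e t (by omega)
  rw [hq, hval]
  by_cases hedge : e = n - 1
  · have hAeq : A = 1 := by rw [hA, show n - e - 1 = 0 by omega]; rfl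
    have hvalS : val S (2^e) = -(gam S n e) := by
      rw [show e = n - 1 from hedge]
      exact stab_edge_S hf (by omega)
    rcases Nat.even_or_odd t with ht | ht
    · have hpar : ¬ Even ((t:ℤ) - A) := by
        rw [hAeq]
        obtain ⟨p, hp⟩ := ht
        rintro ⟨v, hv⟩
        push_cast at hv
        omega
      rw [if_neg hpar, hvalS, ht.neg_one_pow]
      ring
    · have hpar : Even ((t:ℤ) - A) := by
        rw [hAeq]
        obtain ⟨p, hp⟩ := ht
        exact ⟨p, by push_cast; omega⟩
      rw [if_pos hpar, hvalS, ht.neg_one_pow]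
      ring
  · have hAeven : Even (A : ℤ) := by
      have : (2:ℕ) ∣ A := by
        rw [hA]
        exact dvd_pow_self 2 (by omega)
      obtain ⟨c, hc⟩ := this
      exact ⟨c, by push_cast [hc]; ring⟩
    obtain ⟨c, hc⟩ := hAeven
    have hvalS : val S (2^e) = gam S n e := stab hf 0 e (by omega)
    rcases Nat.even_or_odd t with ht | ht
    · have hpar : Even ((t:ℤ) - A) := by
        obtain ⟨p, hp⟩ := ht
        exact ⟨p - c, by push_cast; omega⟩
      rw [if_pos hpar, hvalS, ht.neg_one_pow]
      ring
    · have hpar : ¬ Even ((t:ℤ) - A) := by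
        obtain ⟨p, hp⟩ := ht
        rintro ⟨v, hv⟩
        push_cast at hv
        omega
      rw [if_neg hpar, hvalS, ht.neg_one_pow]
      ring

end Statement17Aux
namespace Statement17Aux

/-- Two-sided partial sum based at `p`. -/
def zsum {A : Type*} [AddCommGroup A] (g : ℤ → A) (p t : ℤ) : A :=
  (∑ i ∈ Finset.range (t - p).toNat, g (p + i)) -
    (∑ i ∈ Finset.range (p - t).toNat, g (t + i))

lemma zsum_self {A : Type*} [AddCommGroup A] (g : ℤ → A) (p : ℤ) : zsum g p p = 0 := by
  simp [zsum]

lemma zsum_succ {A : Type*} [AddCommGroup A] (g : ℤ → A) (p t : ℤ) :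
    zsum g p (t + 1) = zsum g p t + g t := by
  rcases le_or_gt p t with hle | hlt
  · have h1 : (t + 1 - p).toNat = (t - p).toNat + 1 := by omega
    have h2 : (p - t).toNat = 0 := by omega
    have h3 : (p - (t + 1)).toNat = 0 := by omega
    rw [zsum, zsum, h1, h2, h3, Finset.sum_range_succ]
    rw [show p + ((t - p).toNat : ℤ) = t by omega]
    simp
  · have h4 : (p - t).toNat = (p - (t + 1)).toNat + 1 := by omega
    have h5 : (t + 1 - p).toNat = 0 := by omega
    have h6 : (t - p).toNat = 0 := by omega
    rw [zsum, zsum, h4, h5, h6, Finset.sum_range_succ']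
    have h7 : ∀ i : ℕ, g (t + (i + 1 : ℕ)) = g (t + 1 + i) := by
      intro i; congr 1; push_cast; ring
    rw [Finset.sum_congr rfl (fun i _ => h7 i)]
    simp

def rotL (v : ℤ × ℤ) : ℤ × ℤ := (-v.2, v.1)

/-- `k`-fold left rotation (mod 4). -/
def rp (k : ℤ) (v : ℤ × ℤ) : ℤ × ℤ :=
  if k % 4 = 0 then v else if k % 4 = 1 then rotL v
    else if k % 4 = 2 then rotL (rotL v) else rotL (rotL (rotL v))

lemma rp_zero (v : ℤ × ℤ) : rp 0 v = v := by simp [rp]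

lemma rp_succ (k : ℤ) (v : ℤ × ℤ) : rp (k + 1) v = rotL (rp k v) := by
  have h4 : k % 4 = 0 ∨ k % 4 = 1 ∨ k % 4 = 2 ∨ k % 4 = 3 := by omega
  rcases h4 with hr | hr | hr | hr <;>
    rw [rp, rp, hr] <;>
    [rw [show (k+1) % 4 = 1 by omega]; rw [show (k+1) % 4 = 2 by omega];
     rw [show (k+1) % 4 = 3 by omega]; rw [show (k+1) % 4 = 0 by omega]] <;>
    norm_num [rotL]

lemma rp_unit {v : ℤ × ℤ} (hv : IsUnitVec v) (k : ℤ) : IsUnitVec (rp k v) := by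
  have h4 : k % 4 = 0 ∨ k % 4 = 1 ∨ k % 4 = 2 ∨ k % 4 = 3 := by omega
  rcases h4 with hr | hr | hr | hr <;> rcases hv with hv | hv | hv | hv <;>
    subst hv <;> simp [rp, hr, rotL, IsUnitVec]

end Statement17Aux
namespace Statement17Aux

theorem mainThm (m : ℕ) : ∀ (a : ℤ → ℤ) (d V : ℤ → ℤ × ℤ), CompleteFold a →
    (∀ t, IsUnitVec (d t)) → (∀ t : ℤ, d (t + 1) = rot (d t) (a t)) →
    (∀ t : ℤ, V (t + 1) = V t + d t) → ∀ i j : ℤ, (i - j).natAbs = m → i ≠ j →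
    (s(V i, V (i + 1)) ≠ s(V j, V (j + 1))) ∧
    (V i = V j → List.Pairwise (· ≠ ·) [-(d (i - 1)), d i, -(d (j - 1)), d j]) := by
  induction m using Nat.strong_induction_on with
  | _ m IH =>
  intro a d V CF hd hrec hV i j hm hij
  have PMa : PM a := CF.1
  obtain ⟨h, a', d', V', alt, ha', CF', hd', hrec', hV', hpsid, hpsiV⟩ :=
    renorm a d V CF hd hrec hV
  have gf : ∀ k : ℤ, d (h + 2*k + 1) = rot (d (h + 2*k)) (a (h + 2*k)) :=
    fun k => hrec (h + 2*k)
  have PM' : ∀ k : ℤ, a (h + 2*k) = 1 ∨ a (h + 2*k) = -1 := fun k => PMa _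
  have Wstep : ∀ k : ℤ, V (h + 2*(k+1)) = V (h + 2*k) + (d (h + 2*k) + d (h + 2*k + 1)) := by
    intro k
    have e1 := hV (h + 2*k)
    have e2 := hV (h + 2*k + 1)
    rw [show h + 2*(k+1) = (h + 2*k + 1) + 1 by ring, e2, e1]
    abel
  have inner : ∀ k : ℤ, V (h + 2*k + 1) = V (h + 2*k) + d (h + 2*k) := fun k => hV (h + 2*k)
  have WeqV' : ∀ k l : ℤ, V (h + 2*k) = V (h + 2*l) → V' k = V' l := by
    intro k l hkl
    apply psi_inj
    rw [hpsiV, hpsiV, hkl]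
  have par1 : ∀ k l : ℤ, V (h + 2*k) = V (h + 2*l) → Even (k - l) := by
    intro k l hkl
    exact genParity V' d' hd' hV' (WeqV' k l hkl)
  have σeven : ∀ k l : ℤ, Even (k - l) → a (h + 2*k) = a (h + 2*l) := by
    intro k l ⟨u, hu⟩
    rw [alt k, alt l]
    by_cases he : Even l
    · have hek : Even k := by
        obtain ⟨p, hp⟩ := he
        exact ⟨p + u, by omega⟩
      simp [he, hek]
    · have hek : ¬ Even k := by
        rintro ⟨p, hp⟩
        exact he ⟨p - u, by omega⟩
      simp [he, hek]
  have σodd : ∀ k l : ℤ, ¬ Even (k - l) → a (h + 2*k) = -(a (h + 2*l)) := by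
    intro k l hkl
    rw [alt k, alt l]
    by_cases he : Even l
    · have hek : ¬ Even k := by
        rintro ⟨q, hq⟩
        obtain ⟨p, hp⟩ := he
        exact hkl ⟨q - p, by omega⟩
      simp [he, hek]
    · have : Even k := by
        rcases Int.even_or_odd k with hk | ⟨q, hq⟩
        · exact hk
        · exfalso
          rcases Int.even_or_odd l with hl | ⟨p, hp⟩
          · exact he hl
          · exact hkl ⟨q - p, by omega⟩
      simp [he, this]
  have twostep : ∀ t : ℤ, V (t + 2) ≠ V t := genTwoStep a V d PMa hd hrec hV
  have AIH : ∀ k l : ℤ, (k - l).natAbs < m → k ≠ l → V (h + 2*k) = V (h + 2*l) →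
      V (h + 2*(k+1)) = V (h + 2*(l+1)) → False := by
    intro k l hlt hne h0 h1
    exact (IH _ hlt a' d' V' CF' hd' hrec' hV' k l rfl hne).1
      (by rw [Sym2.eq_iff]; exact Or.inl ⟨WeqV' k l h0, WeqV' (k+1) (l+1) h1⟩)
  have BIH : ∀ k l : ℤ, (k - l).natAbs < m → k ≠ l → V (h + 2*k) = V (h + 2*l) →
      List.Pairwise (· ≠ ·)
        [-(d (h + 2*(k-1)) + d (h + 2*(k-1) + 1)), d (h + 2*k) + d (h + 2*k + 1),
         -(d (h + 2*(l-1)) + d (h + 2*(l-1) + 1)), d (h + 2*l) + d (h + 2*l + 1)] := by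
    intro k l hlt hne h0
    have hb := (IH _ hlt a' d' V' CF' hd' hrec' hV' k l rfl hne).2 (WeqV' k l h0)
    have := pw4_map psi psi_inj hb
    simpa only [psi_neg, hpsid] using this
  constructor
  · -- Part A : distinct edges
    intro hedge
    rcases Sym2.eq_iff.mp hedge with ⟨e1, e2⟩ | ⟨e1, e2⟩
    · -- α : V i = V j, V (i+1) = V (j+1)
      rcases Int.even_or_odd (i - h) with ⟨k, hk⟩ | ⟨k, hk⟩
      · -- i = h + 2k
        obtain ⟨l, hl⟩ : ∃ l : ℤ, j = h + 2*l := by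
          obtain ⟨u, hu⟩ := genParity V d hd hV e1
          exact ⟨k - u, by omega⟩
        have hi : i = h + 2*k := by omega
        subst hi; subst hl
        have hkl : k ≠ l := by omega
        have ef : d (h + 2*k) = d (h + 2*l) := by
          have t1 := inner k
          have t2 := inner l
          rw [e1] at t1
          rw [e2, t2] at t1
          exact (add_left_cancel t1).symm
        have eσ : a (h + 2*k) = a (h + 2*l) := σeven k l (par1 k l e1)
        have eg : d (h + 2*k + 1) = d (h + 2*l + 1) := by rw [gf k, gf l, ef, eσ]
        exact AIH k l (by omega) hkl e1 (by rw [Wstep k, Wstep l, e1, ef, eg])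
      · -- i = h + 2k + 1
        obtain ⟨l, hl⟩ : ∃ l : ℤ, j = h + 2*l + 1 := by
          obtain ⟨u, hu⟩ := genParity V d hd hV e1
          exact ⟨k - u, by omega⟩
        have hi : i = h + 2*k + 1 := by omega
        subst hi; subst hl
        have hkl : k ≠ l := by omega
        have e2' : V (h + 2*(k+1)) = V (h + 2*(l+1)) := by
          rw [show h + 2*(k+1) = h + 2*k + 1 + 1 by ring, show h + 2*(l+1) = h + 2*l + 1 + 1 by ring]
          exact e2
        have epar : Even (k - l) := by
          obtain ⟨u, hu⟩ := par1 (k+1) (l+1) e2'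
          exact ⟨u, by omega⟩
        have eσ := σeven k l epar
        have eg : d (h + 2*k + 1) = d (h + 2*l + 1) := by
          have t1 := hV (h + 2*k + 1)
          have t2 := hV (h + 2*l + 1)
          rw [show h + 2*k + 1 + 1 = h + 2*(k+1) by ring] at t1
          rw [show h + 2*l + 1 + 1 = h + 2*(l+1) by ring] at t2
          rw [e2', e1] at t1
          rw [t2] at t1
          exact (add_left_cancel t1).symm
        have ef : d (h + 2*k) = d (h + 2*l) := by
          have u1 : d (h + 2*k) = rot (d (h + 2*k + 1)) (-(a (h + 2*k))) := by
            rw [gf k]; exact (rot_inv_left _ (PM' k)).symm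
          have u2 : d (h + 2*l) = rot (d (h + 2*l + 1)) (-(a (h + 2*l))) := by
            rw [gf l]; exact (rot_inv_left _ (PM' l)).symm
          rw [u1, u2, eg, eσ]
        have eW : V (h + 2*k) = V (h + 2*l) := by
          have t1 := inner k
          have t2 := inner l
          rw [e1, t2, ef] at t1
          exact (add_right_cancel t1).symm
        exact AIH k l (by omega) hkl eW (by rw [Wstep k, Wstep l, eW, ef, eg])
    · -- β : V i = V (j+1), V (i+1) = V j
      rcases Int.even_or_odd (i - h) with ⟨k, hk⟩ | ⟨k, hk⟩
      · -- i = h + 2k, j = h + 2l + 1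
        obtain ⟨l, hl⟩ : ∃ l : ℤ, j = h + 2*l + 1 := by
          obtain ⟨u, hu⟩ := genParity V d hd hV e1
          exact ⟨k - u - 1, by omega⟩
        have hi : i = h + 2*k := by omega
        subst hi; subst hl
        have e1' : V (h + 2*k) = V (h + 2*(l+1)) := by
          rw [show h + 2*(l+1) = h + 2*l + 1 + 1 by ring]
          exact e1
        by_cases hkl0 : k = l
        · subst hkl0
          exact twostep (h + 2*k) (by rw [show h + 2*k + 2 = h + 2*(k+1) by ring]; exact e1'.symm)
        by_cases hkl1 : k = l + 1
        · subst hkl1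
          exact twostep (h + 2*l + 1) (by rw [show h + 2*l + 1 + 2 = h + 2*(l+1) + 1 by ring]; exact e2)
        have epar : Even (k - (l+1)) := par1 k (l+1) e1'
        have eσ : a (h + 2*l) = -(a (h + 2*k)) := by
          apply σodd l k
          obtain ⟨u, hu⟩ := epar
          rintro ⟨v, hv⟩
          omega
        have q1 : V (h + 2*k) + d (h + 2*k) = V (h + 2*l) + d (h + 2*l) :=
          (inner k).symm.trans (e2.trans (inner l))
        have q2 : V (h + 2*k) = V (h + 2*l) + (d (h + 2*l) + d (h + 2*l + 1)) :=
          e1'.trans (Wstep l)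
        have egl : d (h + 2*l + 1) = -(d (h + 2*k)) := by linear_combination q1 - q2
        have efl : d (h + 2*l) = -(d (h + 2*k + 1)) := by
          have u2 : d (h + 2*l) = rot (d (h + 2*l + 1)) (-(a (h + 2*l))) := by
            rw [gf l]; exact (rot_inv_left _ (PM' l)).symm
          rw [u2, egl, eσ, neg_neg, rot_neg, ← gf k]
        have eD : d (h + 2*l) + d (h + 2*l + 1) = -(d (h + 2*k) + d (h + 2*k + 1)) := by
          linear_combination efl + egl
        have hb := BIH k (l+1) (by omega) hkl1 e1'
        rw [add_sub_cancel_right] at hb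
        obtain ⟨-, -, -, h23, -, -⟩ := (pw4_iff _ _ _ _).mp hb
        exact h23 (by rw [eD, neg_neg])
      · -- i = h + 2k + 1, j = h + 2l
        obtain ⟨l, hl⟩ : ∃ l : ℤ, j = h + 2*l := by
          obtain ⟨u, hu⟩ := genParity V d hd hV e1
          exact ⟨k - u, by omega⟩
        have hi : i = h + 2*k + 1 := by omega
        subst hi; subst hl
        have e2' : V (h + 2*(k+1)) = V (h + 2*l) := by
          rw [show h + 2*(k+1) = h + 2*k + 1 + 1 by ring]
          exact e2
        by_cases hkl0 : l = k + 1
        · subst hkl0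
          exact twostep (h + 2*k + 1)
            (by rw [show h + 2*k + 1 + 2 = h + 2*(k+1) + 1 by ring]; exact e1.symm)
        by_cases hkl1 : l = k
        · subst hkl1
          exact twostep (h + 2*l) (by rw [show h + 2*l + 2 = h + 2*(l+1) by ring]; exact e2')
        have epar : Even (k + 1 - l) := par1 (k+1) l e2'
        have eσ : a (h + 2*l) = -(a (h + 2*k)) := by
          apply σodd l k
          obtain ⟨u, hu⟩ := epar
          rintro ⟨v, hv⟩
          omega
        have q1 : V (h + 2*l) = V (h + 2*k) + (d (h + 2*k) + d (h + 2*k + 1)) :=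
          e2'.symm.trans (Wstep k)
        have q2 : V (h + 2*k) + d (h + 2*k) = V (h + 2*l) + d (h + 2*l) :=
          (inner k).symm.trans (e1.trans (inner l))
        have efl : d (h + 2*l) = -(d (h + 2*k + 1)) := by linear_combination -q2 - q1
        have egl : d (h + 2*l + 1) = -(d (h + 2*k)) := by
          have u3 : rot (d (h + 2*k + 1)) (-(a (h + 2*k))) = d (h + 2*k) := by
            rw [gf k]; exact rot_inv_left _ (PM' k)
          rw [gf l, efl, eσ, rot_neg, u3]
        have eD : d (h + 2*l) + d (h + 2*l + 1) = -(d (h + 2*k) + d (h + 2*k + 1)) := by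
          linear_combination efl + egl
        have hb := BIH (k+1) l (by omega) (fun hc => hkl0 hc.symm) e2'
        rw [add_sub_cancel_right] at hb
        obtain ⟨-, -, h14, -, -, -⟩ := (pw4_iff _ _ _ _).mp hb
        exact h14 (by rw [eD])
  · -- Part B : non-crossing at vertices
    intro hVij
    have hs1 : i ≠ j + 2 := fun hc => twostep j (by rw [← hc]; exact hVij)
    have hs2 : j ≠ i + 2 := fun hc => twostep i (by rw [← hc]; exact hVij.symm)
    rcases Int.even_or_odd (i - h) with ⟨k, hk⟩ | ⟨k, hk⟩
    · -- r = 0 : i = h + 2k, j = h + 2l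
      obtain ⟨l, hl⟩ : ∃ l : ℤ, j = h + 2*l := by
        obtain ⟨u, hu⟩ := genParity V d hd hV hVij
        exact ⟨k - u, by omega⟩
      have hi : i = h + 2*k := by omega
      subst hi; subst hl
      have hkl : k ≠ l := by omega
      have epar := par1 k l hVij
      have eσ := σeven k l epar
      have eσk1 : a (h + 2*(k-1)) = -(a (h + 2*k)) := by
        apply σodd (k-1) k
        rintro ⟨v, hv⟩
        omega
      have eσl1 : a (h + 2*(l-1)) = -(a (h + 2*k)) := by
        apply σodd (l-1) k
        obtain ⟨u, hu⟩ := epar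
        rintro ⟨v, hv⟩
        omega
      have Lm1 : ∀ x : ℤ, a (h + 2*x) = a (h + 2*k) →
          d (h + 2*x) + d (h + 2*x) =
            (d (h + 2*x) + d (h + 2*x + 1)) +
              rot (d (h + 2*x) + d (h + 2*x + 1)) (-(a (h + 2*k))) := by
        intro x hx
        rw [gf x, hx]
        rcases PM' k with hs | hs <;> rw [hs] <;>
          norm_num [rot, Prod.ext_iff] <;> ring
      have Lm2 : ∀ x : ℤ, a (h + 2*x) = -(a (h + 2*k)) →
          d (h + 2*x + 1) + d (h + 2*x + 1) =
            (d (h + 2*x) + d (h + 2*x + 1)) +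
              rot (d (h + 2*x) + d (h + 2*x + 1)) (-(a (h + 2*k))) := by
        intro x hx
        rw [gf x, hx]
        rcases PM' k with hs | hs <;> rw [hs] <;>
          norm_num [rot, Prod.ext_iff] <;> constructor <;> ring
      have hFinj : ∀ y z : ℤ × ℤ, y + rot y (-(a (h + 2*k))) = z + rot z (-(a (h + 2*k))) →
          y = z := by
        intro y z hyz
        rcases PM' k with hs | hs <;> rw [hs] at hyz <;>
          norm_num [rot, Prod.ext_iff] at hyz <;>
          (rw [Prod.ext_iff]; omega)
      have key : ∀ y x y' x' : ℤ × ℤ,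
          y + y = x + rot x (-(a (h + 2*k))) → y' + y' = x' + rot x' (-(a (h + 2*k))) →
          x ≠ x' → y ≠ y' := by
        intro y x y' x' h1 h2 hne hyy
        exact hne (hFinj x x' (by rw [← h1, ← h2, hyy]))
      have hbd := BIH k l (by omega) hkl hVij
      obtain ⟨b12, b13, b14, b23, b24, b34⟩ := (pw4_iff _ _ _ _).mp hbd
      have D1 : (-(d (h + 2*(k-1) + 1))) + (-(d (h + 2*(k-1) + 1))) =
          (-(d (h + 2*(k-1)) + d (h + 2*(k-1) + 1))) +
            rot (-(d (h + 2*(k-1)) + d (h + 2*(k-1) + 1))) (-(a (h + 2*k))) := by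
        rw [rot_neg]
        linear_combination -(Lm2 (k-1) eσk1)
      have D2 := Lm1 k rfl
      have D3 : (-(d (h + 2*(l-1) + 1))) + (-(d (h + 2*(l-1) + 1))) =
          (-(d (h + 2*(l-1)) + d (h + 2*(l-1) + 1))) +
            rot (-(d (h + 2*(l-1)) + d (h + 2*(l-1) + 1))) (-(a (h + 2*k))) := by
        rw [rot_neg]
        linear_combination -(Lm2 (l-1) eσl1)
      have D4 := Lm1 l eσ.symm
      rw [show h + 2*k - 1 = h + 2*(k-1) + 1 by ring, show h + 2*l - 1 = h + 2*(l-1) + 1 by ring,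
        pw4_iff]
      exact ⟨key _ _ _ _ D1 D2 b12, key _ _ _ _ D1 D3 b13, key _ _ _ _ D1 D4 b14,
        key _ _ _ _ D2 D3 b23, key _ _ _ _ D2 D4 b24, key _ _ _ _ D3 D4 b34⟩
    · -- r = 1 : i = h + 2k + 1, j = h + 2l + 1
      obtain ⟨l, hl⟩ : ∃ l : ℤ, j = h + 2*l + 1 := by
        obtain ⟨u, hu⟩ := genParity V d hd hV hVij
        exact ⟨k - u, by omega⟩
      have hi : i = h + 2*k + 1 := by omega
      subst hi; subst hl
      have hkl : k ≠ l := by omega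
      have hkl1 : k ≠ l + 1 := by omega
      have hkl2 : l ≠ k + 1 := by omega
      have q0 : V (h + 2*k) + d (h + 2*k) = V (h + 2*l) + d (h + 2*l) :=
        (inner k).symm.trans (hVij.trans (inner l))
      rw [show h + 2*k + 1 - 1 = h + 2*k by ring, show h + 2*l + 1 - 1 = h + 2*l by ring, pw4_iff]
      refine ⟨?_, ?_, ?_, ?_, ?_, ?_⟩
      · -- -(f k) ≠ g k
        intro hc
        exact rot_ne_neg_self (hd (h + 2*k)) (a (h + 2*k)) (by rw [← gf k]; exact hc.symm)
      · -- -(f k) ≠ -(f l)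
        intro hc
        have hf : d (h + 2*k) = d (h + 2*l) := neg_inj.mp hc
        have eW : V (h + 2*k) = V (h + 2*l) := by linear_combination q0 - hf
        have eσ := σeven k l (par1 k l eW)
        have eg : d (h + 2*k + 1) = d (h + 2*l + 1) := by rw [gf k, gf l, hf, eσ]
        exact AIH k l (by omega) hkl eW (by rw [Wstep k, Wstep l, eW, hf, eg])
      · -- -(f k) ≠ g l
        intro hc
        have hgl : d (h + 2*l + 1) = -(d (h + 2*k)) := hc.symm
        have q2 : V (h + 2*(l+1)) = V (h + 2*k) := by
          rw [Wstep l]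
          linear_combination q0.symm + hgl
        have eσ : a (h + 2*l) = -(a (h + 2*k)) := by
          apply σodd l k
          obtain ⟨u, hu⟩ := par1 k (l+1) q2.symm
          rintro ⟨v, hv⟩
          omega
        have efl : d (h + 2*l) = -(d (h + 2*k + 1)) := by
          have u2 : d (h + 2*l) = rot (d (h + 2*l + 1)) (-(a (h + 2*l))) := by
            rw [gf l]; exact (rot_inv_left _ (PM' l)).symm
          rw [u2, hgl, eσ, neg_neg, rot_neg, ← gf k]
        have eD : d (h + 2*l) + d (h + 2*l + 1) = -(d (h + 2*k) + d (h + 2*k + 1)) := by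
          linear_combination efl + hgl
        have hb := BIH k (l+1) (by omega) hkl1 q2.symm
        rw [add_sub_cancel_right] at hb
        obtain ⟨-, -, -, h23, -, -⟩ := (pw4_iff _ _ _ _).mp hb
        exact h23 (by rw [eD, neg_neg])
      · -- g k ≠ -(f l)
        intro hc
        have hfl : d (h + 2*l) = -(d (h + 2*k + 1)) := by rw [hc, neg_neg]
        have q2 : V (h + 2*(k+1)) = V (h + 2*l) := by
          rw [Wstep k]
          linear_combination q0 + hfl
        have eσ : a (h + 2*l) = -(a (h + 2*k)) := by
          apply σodd l k
          obtain ⟨u, hu⟩ := par1 (k+1) l q2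
          rintro ⟨v, hv⟩
          omega
        have egl : d (h + 2*l + 1) = -(d (h + 2*k)) := by
          have u3 : rot (d (h + 2*k + 1)) (-(a (h + 2*k))) = d (h + 2*k) := by
            rw [gf k]; exact rot_inv_left _ (PM' k)
          rw [gf l, hfl, eσ, rot_neg, u3]
        have eD : d (h + 2*l) + d (h + 2*l + 1) = -(d (h + 2*k) + d (h + 2*k + 1)) := by
          linear_combination hfl + egl
        have hb := BIH (k+1) l (by omega) (fun hcc => hkl2 hcc.symm) q2
        rw [add_sub_cancel_right] at hb
        obtain ⟨-, -, h14, -, -, -⟩ := (pw4_iff _ _ _ _).mp hb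
        exact h14 (by rw [eD])
      · -- g k ≠ g l
        intro hc
        have q2 : V (h + 2*(k+1)) = V (h + 2*(l+1)) := by
          rw [Wstep k, Wstep l]
          linear_combination q0 + hc
        have epar : Even (k - l) := by
          obtain ⟨u, hu⟩ := par1 (k+1) (l+1) q2
          exact ⟨u, by omega⟩
        have eσ := σeven k l epar
        have ef : d (h + 2*k) = d (h + 2*l) := by
          have u1 : d (h + 2*k) = rot (d (h + 2*k + 1)) (-(a (h + 2*k))) := by
            rw [gf k]; exact (rot_inv_left _ (PM' k)).symm
          have u2 : d (h + 2*l) = rot (d (h + 2*l + 1)) (-(a (h + 2*l))) := by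
            rw [gf l]; exact (rot_inv_left _ (PM' l)).symm
          rw [u1, u2, hc, eσ]
        have eW : V (h + 2*k) = V (h + 2*l) := by linear_combination q0 - ef
        exact AIH k l (by omega) hkl eW q2
      · -- -(f l) ≠ g l
        intro hc
        exact rot_ne_neg_self (hd (h + 2*l)) (a (h + 2*l)) (by rw [← gf l]; exact hc.symm)

end Statement17Aux

namespace Statement17Aux

lemma dirAt_succ (d0 : ℤ × ℤ) (η : List ℤ) {i : ℕ} (hi : i < η.length) :
    dirAt d0 η (i + 1) = rot (dirAt d0 η i) (η.getD i 0) := by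
  rw [dirAt, dirAt, List.take_succ, List.foldl_append, List.getElem?_eq_getElem hi]
  rw [List.getD_eq_getElem _ _ hi]
  rfl

lemma vertexAt_succ (X0 d0 : ℤ × ℤ) (η : List ℤ) (i : ℕ) :
    vertexAt X0 d0 η (i + 1) = vertexAt X0 d0 η i + dirAt d0 η i := by
  rw [vertexAt, vertexAt, Finset.sum_range_succ]
  abel

end Statement17Aux


open Statement17Aux in
theorem statement17 (η : List ℤ) (hη : IsFiniteFold η) (X0 d0 : ℤ × ℤ)
    (hd : IsUnitVec d0) :
    (∀ i j : ℕ, i ≤ η.length → j ≤ η.length → i ≠ j →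
        edgeAt X0 d0 η i ≠ edgeAt X0 d0 η j) ∧
    ∀ k l : ℕ, 1 ≤ k → k ≤ η.length → 1 ≤ l → l ≤ η.length → k ≠ l →
      vertexAt X0 d0 η k = vertexAt X0 d0 η l →
      List.Pairwise (· ≠ ·)
        [-(dirAt d0 η (k - 1)), dirAt d0 η k, -(dirAt d0 η (l - 1)), dirAt d0 η l] := by
  obtain ⟨n, S, hfold, hinf⟩ := hη
  obtain ⟨Apre, Bsuf, hS⟩ := hinf
  set a : ℤ → ℤ := foldSeq (gam S n) with ha
  have CFa : CompleteFold a := foldSeq_complete _ (gam_pm hfold)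
  have PMa : PM a := CFa.1
  set p : ℤ := (Apre.length : ℤ) + 1 - 2^n with hp
  have hSlen : S.length = 2^n - 1 := isFold_length hfold
  have hSsum : S.length = Apre.length + η.length + Bsuf.length := by
    rw [← hS]; simp; omega
  have window : ∀ i : ℕ, i < η.length → a (p + i) = η.getD i 0 := by
    intro i hi
    have hq : Apre.length + i + 1 ≤ 2^n - 1 := by omega
    have h1 := aMatch hfold (Apre.length + i + 1) (by omega) hq
    have hidx : p + i = ((Apre.length + i + 1 : ℕ) : ℤ) - 2^n := by
      rw [hp]; push_cast; ring
    rw [hidx, ha, h1, val, ← hS]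
    rw [show Apre.length + i + 1 - 1 = Apre.length + i by omega]
    rw [List.append_assoc]
    rw [List.getD_append_right _ _ _ _ (by omega)]
    rw [show Apre.length + i - Apre.length = i by omega]
    rw [List.getD_append _ _ _ _ hi]
  -- the bi-infinite curve
  set dc : ℤ → ℤ × ℤ := fun t => rp (zsum a p t) d0 with hdc
  set Vc : ℤ → ℤ × ℤ := fun t => X0 + zsum dc p t with hVc
  have dunit : ∀ t : ℤ, IsUnitVec (dc t) := fun t => rp_unit hd _
  have drec : ∀ t : ℤ, dc (t + 1) = rot (dc t) (a t) := by
    intro t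
    rw [hdc]
    simp only
    rw [zsum_succ]
    rcases PMa t with h1 | h1 <;> rw [h1]
    · rw [rp_succ]
      simp [rot, rotL]
    · have h5 := rp_succ (zsum a p t - 1) d0
      rw [sub_add_cancel] at h5
      rw [show zsum a p t + (-1) = zsum a p t - 1 by ring, h5]
      simp [rot, rotL]
  have Vrec : ∀ t : ℤ, Vc (t + 1) = Vc t + dc t := by
    intro t
    rw [hVc]
    simp only
    rw [zsum_succ]
    abel
  have hd0 : dc p = d0 := by rw [hdc]; simp only; rw [zsum_self, rp_zero]
  have hX0 : Vc p = X0 := by rw [hVc]; simp only; rw [zsum_self, add_zero]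
  have hdm : ∀ i : ℕ, i ≤ η.length → dc (p + i) = dirAt d0 η i := by
    intro i
    induction i with
    | zero => intro _; simpa [dirAt] using hd0
    | succ i ih =>
        intro hi
        have h1 : (p + (i + 1 : ℕ)) = (p + i) + 1 := by push_cast; ring
        rw [h1, drec, ih (by omega), window i (by omega), dirAt_succ d0 η (by omega)]
  have hVm : ∀ i : ℕ, i ≤ η.length + 1 → Vc (p + i) = vertexAt X0 d0 η i := by
    intro i
    induction i with
    | zero =>
        intro _
        have : vertexAt X0 d0 η 0 = X0 := by simp [vertexAt]
        rw [this]
        simpa using hX0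
    | succ i ih =>
        intro hi
        have h1 : (p + (i + 1 : ℕ)) = (p + i) + 1 := by push_cast; ring
        rw [h1, Vrec, ih (by omega), hdm i (by omega), vertexAt_succ]
  constructor
  · intro i j hi hj hij
    intro hc
    have hne : (p + i : ℤ) ≠ (p + j : ℤ) := by omega
    apply (mainThm ((p + i) - (p + j)).natAbs a dc Vc CFa dunit drec Vrec
      (p + i) (p + j) rfl hne).1
    have r1 : Vc (p + (i:ℤ)) = vertexAt X0 d0 η i := hVm i (by omega)
    have r2 : Vc (p + (i:ℤ) + 1) = vertexAt X0 d0 η (i + 1) := by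
      rw [show p + (i:ℤ) + 1 = p + ((i+1 : ℕ) : ℤ) by push_cast; ring]
      exact hVm (i+1) (by omega)
    have r3 : Vc (p + (j:ℤ)) = vertexAt X0 d0 η j := hVm j (by omega)
    have r4 : Vc (p + (j:ℤ) + 1) = vertexAt X0 d0 η (j + 1) := by
      rw [show p + (j:ℤ) + 1 = p + ((j+1 : ℕ) : ℤ) by push_cast; ring]
      exact hVm (j+1) (by omega)
    rw [r1, r2, r3, r4]
    exact hc
  · intro k l hk1 hkL hl1 hlL hkl heq
    have hne : (p + k : ℤ) ≠ (p + l : ℤ) := by omega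
    have hmain := (mainThm ((p + k) - (p + l)).natAbs a dc Vc CFa dunit drec Vrec
      (p + k) (p + l) rfl hne).2
      (by rw [hVm k (by omega), hVm l (by omega)]; exact heq)
    have c1 : dc (p + (k:ℤ) - 1) = dirAt d0 η (k - 1) := by
      rw [show p + (k:ℤ) - 1 = p + ((k - 1 : ℕ) : ℤ) by omega]
      exact hdm (k-1) (by omega)
    have c2 : dc (p + (k:ℤ)) = dirAt d0 η k := hdm k (by omega)
    have c3 : dc (p + (l:ℤ) - 1) = dirAt d0 η (l - 1) := by
      rw [show p + (l:ℤ) - 1 = p + ((l - 1 : ℕ) : ℤ) by omega]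
      exact hdm (l-1) (by omega)
    have c4 : dc (p + (l:ℤ)) = dirAt d0 η l := hdm l (by omega)
    rw [c1, c2, c3, c4] at hmain
    exact hmain
end
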